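/- arXiv:2311.15431 — 8 statements merged into one kernel-verified Lean document; each statement's English description precedes it below -/
import Mathlib

section
/- For any word u over a finite nonempty alphabet A, the piecewise complexity satisfies h(u) = 1 + max{ δ(u, u₁·a·u₂) : u = u₁·u₂ a factorization of u (u₁, u₂ possibly empty), a ∈ A }, and equivalently h(u) = 1 + max{ r(u₁,a) + ℓ(a,u₂) : u = u₁·u₂, a ∈ A }. -/
variable {A : Type*}

/-- Simon's congruence of order `k`: `u` and `v` have the same subwords of length ≤ k. -/
def SimonCong (k : ℕ) (u v : List A) : Prop :=
  ∀ s : List A, s.length ≤ k → (s.Sublist u ↔ s.Sublist v)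

/-- Subword distance `δ(u,v) = sup {k | u ∼ₖ v} ∈ ℕ∞`. -/
noncomputable def sdelta (u v : List A) : ℕ∞ :=
  sSup {d : ℕ∞ | ∃ k : ℕ, d = k ∧ SimonCong k u v}

/-- Right side distance `r(u,t) = δ(u, u·t)`. -/
noncomputable def rdist (u t : List A) : ℕ∞ := sdelta u (u ++ t)

/-- Left side distance `ℓ(t,u) = δ(t·u, u)`. -/
noncomputable def ldist (t u : List A) : ℕ∞ := sdelta (t ++ u) u

/-- Piecewise complexity `h(u)`: least `n` such that any `v` with `u ∼ₙ v` equals `u`. -/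
noncomputable def pcHeight (u : List A) : ℕ :=
  sInf {n : ℕ | ∀ v : List A, SimonCong n u v → v = u}

/-- `u` is `m`-reduced: no strict subword of `u` is `∼ₘ`-equivalent to `u`. -/
def Reduced (m : ℕ) (u : List A) : Prop :=
  ∀ u' : List A, u'.Sublist u → u' ≠ u → ¬ SimonCong m u u'

/-- Piecewise minimality index `ρ(u)`: least `m` such that `u` is `m`-reduced. -/
noncomputable def pcRho (u : List A) : ℕ := sInf {m : ℕ | Reduced m u}

/-- An `A`-arch: contains every letter of `A` but no strict prefix does. -/
def IsArch (A : Type*) [Fintype A] (s : List A) : Prop :=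
  (∀ a : A, a ∈ s) ∧ ∀ t : List A, t <+: s → t ≠ s → ∃ a : A, a ∉ t

/-- The infinite periodic word `u^ω`. -/
def omegaWord (u : List A) (hu : u ≠ []) (i : ℕ) : A :=
  u.get ⟨i % u.length, Nat.mod_lt i (List.length_pos_iff.mpr hu)⟩

/-- The arch-jumping function `α` on `u^ω`: `α(i)` is the least `j > i` such that
every letter of `A` occurs among positions `i, …, j-1` of `u^ω`. -/
noncomputable def archJump (u : List A) (hu : u ≠ []) (i : ℕ) : ℕ :=
  sInf {j : ℕ | i < j ∧ ∀ a : A, ∃ m : ℕ, i ≤ m ∧ m < j ∧ omegaWord u hu m = a}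

/-- `p` is an arch-period of `u` starting at `i`. -/
def IsArchPeriodAt (u : List A) (hu : u ≠ []) (i p : ℕ) : Prop :=
  0 < p ∧ ∃ k : ℕ, (archJump u hu)^[k + p] i ≡ (archJump u hu)^[k] i [MOD u.length]

/-- The arch-period of `u`: the least arch-period starting at 0. -/
noncomputable def archPeriod (u : List A) (hu : u ≠ []) : ℕ :=
  sInf {p : ℕ | IsArchPeriodAt u hu 0 p}

/-- `K_u`: the least `k` with `α^{k+p}(0) ≡ α^k(0) (mod L)`. -/
noncomputable def archTransientIndex (u : List A) (hu : u ≠ []) : ℕ :=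
  sInf {k : ℕ |
    (archJump u hu)^[k + archPeriod u hu] 0 ≡ (archJump u hu)^[k] 0 [MOD u.length]}

/-- The transient `T_u = α^{K_u}(0)`. -/
noncomputable def archTransient (u : List A) (hu : u ≠ []) : ℕ :=
  (archJump u hu)^[archTransientIndex u hu] 0

/-- The span `Δ_u = α^{K_u+p_u}(0) − α^{K_u}(0)`. -/
noncomputable def archSpan (u : List A) (hu : u ≠ []) : ℕ :=
  (archJump u hu)^[archTransientIndex u hu + archPeriod u hu] 0 - archTransient u hu

/-- `u^n`: the `n`-fold concatenation of `u`. -/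
def listPow (u : List A) (n : ℕ) : List A := (List.replicate n u).flatten

/-! ### Auxiliary lemmas for `stmt0` -/

section Aux

open List

lemma simon_zero (u v : List A) : SimonCong 0 u v := by
  intro s hs
  have : s = [] := by
    cases s with
    | nil => rfl
    | cons a s => simp at hs
  subst this
  simp

lemma simon_mono {k m : ℕ} {u v : List A} (hkm : k ≤ m) (h : SimonCong m u v) :
    SimonCong k u v := fun s hs => h s (hs.trans hkm)

lemma simon_refl (k : ℕ) (u : List A) : SimonCong k u u := fun _ _ => Iff.rfl

lemma simon_symm {k : ℕ} {u v : List A} (h : SimonCong k u v) : SimonCong k v u :=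
  fun s hs => (h s hs).symm

lemma simon_trans {k : ℕ} {u v w : List A} (h1 : SimonCong k u v) (h2 : SimonCong k v w) :
    SimonCong k u w := fun s hs => (h1 s hs).trans (h2 s hs)

lemma simon_sandwich {k : ℕ} {x z y : List A} (hxz : x.Sublist z) (hzy : z.Sublist y)
    (h : SimonCong k x y) : SimonCong k x z := by
  intro s hs
  constructor
  · exact fun hsx => hsx.trans hxz
  · exact fun hsz => (h s hs).mpr (hsz.trans hzy)

lemma simon_eq_of_length_succ {u v : List A} (h : SimonCong (u.length + 1) u v) : v = u := by
  have huv : u.Sublist v := (h u (by omega)).mp (List.Sublist.refl u)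
  by_contra hne
  have hlen : u.length < v.length := by
    rcases lt_or_eq_of_le huv.length_le with h' | h'
    · exact h'
    · exact absurd (huv.eq_of_length h') (fun he => hne he.symm)
  have hts : (v.take (u.length + 1)).Sublist v := List.take_sublist _ _
  have htl : (v.take (u.length + 1)).length = u.length + 1 := by
    rw [List.length_take]; omega
  have := (h _ (le_of_eq htl)).mpr hts
  have := this.length_le
  omega

lemma cons_sublist_of_ne {a b : A} {l m : List A} (h : (a :: l).Sublist (b :: m)) (hab : a ≠ b) :
    (a :: l).Sublist m := by
  cases h with
  | cons _ h => exact h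
  | cons_cons => exact absurd rfl hab

lemma sublist_cons_destruct {s m : List A} {c : A} (h : s.Sublist (c :: m)) :
    s.Sublist m ∨ ∃ s', s = c :: s' ∧ s'.Sublist m := by
  cases s with
  | nil => exact Or.inl (List.nil_sublist m)
  | cons d s' =>
    cases h with
    | cons _ h => exact Or.inl h
    | cons_cons _ h => exact Or.inr ⟨s', rfl, h⟩

lemma sublist_snoc_destruct {s l : List A} {c : A} (h : s.Sublist (l ++ [c])) :
    s.Sublist l ∨ ∃ s', s = s' ++ [c] ∧ s'.Sublist l := by
  rw [List.sublist_append_iff] at h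
  obtain ⟨α, β, rfl, hα, hβ⟩ := h
  rcases sublist_cons_destruct hβ with hβ' | ⟨β', hβ', _⟩
  · have : β = [] := List.sublist_nil.mp hβ'
    subst this
    exact Or.inl (by simpa using hα)
  · have : β' = [] := List.sublist_nil.mp (by
      cases hβ with
      | cons _ h => exact absurd (hβ' ▸ h) (by simp)
      | cons_cons _ h => cases hβ'; exact h)
    subst this
    subst hβ'
    exact Or.inr ⟨α, rfl, hα⟩

lemma split_mid {q₁ q₂ l₁ l₂ : List A} {c : A} (h : (q₁ ++ c :: q₂).Sublist (l₁ ++ l₂)) :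
    (q₁ ++ [c]).Sublist l₁ ∨ (c :: q₂).Sublist l₂ := by
  rw [List.sublist_append_iff] at h
  obtain ⟨α, β, heq, hα, hβ⟩ := h
  rcases le_or_gt (q₁.length + 1) α.length with hle | hlt
  · left
    have h1 : (q₁ ++ c :: q₂).take (q₁.length + 1) = q₁ ++ [c] := by
      have := List.take_length_add_append (l₁ := q₁) (l₂ := c :: q₂) 1
      simpa using this
    have h2 : (α ++ β).take (q₁.length + 1) = α.take (q₁.length + 1) :=
      List.take_append_of_le_length hle
    rw [heq, h2] at h1
    exact h1 ▸ ((List.take_sublist _ _).trans hα)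
  · right
    have h1 : (q₁ ++ c :: q₂).drop q₁.length = c :: q₂ := List.drop_left (l₁ := q₁) (l₂ := c :: q₂)
    have h2 : (α ++ β).drop q₁.length = β.drop (q₁.length - α.length) := by
      have hα' : α.length ≤ q₁.length := by omega
      have h3 := List.drop_length_add_append (l₁ := α) (l₂ := β) (q₁.length - α.length)
      rw [show α.length + (q₁.length - α.length) = q₁.length from by omega] at h3
      exact h3
    rw [heq, h2] at h1
    exact h1 ▸ ((List.drop_sublist _ _).trans hβ)

lemma exists_tau {t x : List A} {c : A} (h : t.Sublist (c :: x)) :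
    ∃ τ, τ.Sublist x ∧ t.Sublist (c :: τ) ∧ τ.length ≤ t.length := by
  rcases sublist_cons_destruct h with h' | ⟨t', rfl, h'⟩
  · exact ⟨t, h', (List.Sublist.refl t).cons c, le_refl _⟩
  · exact ⟨t', h', List.Sublist.refl _, by simp⟩

lemma exists_insert_of_sublist_succ {u w : List A} (h : u.Sublist w)
    (hl : w.length = u.length + 1) :
    ∃ (u₁ u₂ : List A) (c : A), u = u₁ ++ u₂ ∧ w = u₁ ++ c :: u₂ := by
  induction h with
  | slnil => simp at hl
  | @cons l₁ l₂ c h ih =>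
    have : l₁ = l₂ := h.eq_of_length (by simp at hl; omega)
    subst this
    exact ⟨[], l₁, c, by simp, by simp⟩
  | @cons_cons l₁ l₂ c h ih =>
    obtain ⟨u₁, u₂, d, h1, h2⟩ := ih (by simp at hl; omega)
    exact ⟨c :: u₁, u₂, d, by simp [h1], by simp [h2]⟩

lemma sublist_exists_between {u v : List A} (h : u.Sublist v) :
    ∀ k, u.length ≤ k → k ≤ v.length → ∃ w, u.Sublist w ∧ w.Sublist v ∧ w.length = k := by
  induction h with
  | slnil =>
    intro k h1 h2
    simp at h2
    exact ⟨[], by simp [h2], by simp, by simp; omega⟩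
  | @cons l₁ l₂ c h ih =>
    intro k h1 h2
    simp at h2
    rcases le_or_gt k l₂.length with hk | hk
    · obtain ⟨w, hw1, hw2, hw3⟩ := ih k h1 hk
      exact ⟨w, hw1, hw2.cons c, hw3⟩
    · have hk' : k = l₂.length + 1 := by omega
      exact ⟨c :: l₂, (h.cons c), List.Sublist.refl _, by simp [hk']⟩
  | @cons_cons l₁ l₂ c h ih =>
    intro k h1 h2
    simp at h1 h2
    obtain ⟨w, hw1, hw2, hw3⟩ := ih (k - 1) (by omega) (by omega)
    exact ⟨c :: w, hw1.cons₂ c, hw2.cons₂ c, by simp [hw3]; omega⟩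

lemma app_singl (u₁ u₂ : List A) (c : A) : u₁ ++ [c] ++ u₂ = u₁ ++ c :: u₂ := by
  simp

/-- Characterisation of the congruence for a single-letter insertion. -/
lemma insert_iff {u₁ u₂ : List A} {c : A} {k : ℕ} :
    SimonCong k (u₁ ++ u₂) (u₁ ++ [c] ++ u₂) ↔
      ∀ s t : List A, s.Sublist u₁ → t.Sublist u₂ → s.length + t.length < k →
        (s ++ c :: t).Sublist (u₁ ++ u₂) := by
  constructor
  · intro h s t hs ht hlen
    have h1 : (s ++ c :: t).Sublist (u₁ ++ [c] ++ u₂) := by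
      rw [app_singl]
      exact hs.append (ht.cons₂ c)
    exact (h (s ++ c :: t) (by simp; omega)).mpr h1
  · intro H s hs
    constructor
    · intro h
      refine h.trans ?_
      rw [List.append_assoc, List.singleton_append]
      exact List.Sublist.append (List.Sublist.refl u₁) ((List.Sublist.refl u₂).cons c)
    · intro h
      rw [List.sublist_append_iff] at h
      obtain ⟨α, β, heq, hα, hβ⟩ := h
      rcases sublist_snoc_destruct hα with hα' | ⟨s₀, rfl, hs₀⟩
      · exact heq ▸ (hα'.append hβ)
      · have hlen : s₀.length + β.length < k := by
          have : s.length = s₀.length + 1 + β.length := by rw [heq]; simp; omega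
          omega
        have := H s₀ β hs₀ hβ hlen
        rw [heq, app_singl]
        exact this

/-- Characterisation of `r`: extension on the right by `c`. -/
lemma rchar {u₁ : List A} {c : A} {k : ℕ} :
    SimonCong k u₁ (u₁ ++ [c]) ↔
      ∀ s : List A, s.Sublist u₁ → s.length < k → (s ++ [c]).Sublist u₁ := by
  constructor
  · intro h s hs hlen
    exact (h (s ++ [c]) (by simp; omega)).mpr (hs.append (List.Sublist.refl [c]))
  · intro H s hs
    constructor
    · intro h
      exact h.trans (List.sublist_append_left u₁ [c])
    · intro h
      rcases sublist_snoc_destruct h with h' | ⟨s₀, rfl, hs₀⟩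
      · exact h'
      · exact H s₀ hs₀ (by simp at hs; omega)

/-- Characterisation of `ℓ`: extension on the left by `c`. -/
lemma lchar {u₂ : List A} {c : A} {k : ℕ} :
    SimonCong k (c :: u₂) u₂ ↔
      ∀ t : List A, t.Sublist u₂ → t.length < k → (c :: t).Sublist u₂ := by
  constructor
  · intro h t ht hlen
    exact (h (c :: t) (by simp; omega)).mp (ht.cons₂ c)
  · intro H s hs
    constructor
    · intro h
      rcases sublist_cons_destruct h with h' | ⟨s₀, rfl, hs₀⟩
      · exact h'
      · exact H s₀ hs₀ (by simp at hs; omega)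
    · intro h
      exact h.cons c

lemma exists_exact {u v : List A} (hne : u ≠ v) :
    ∃ m : ℕ, SimonCong m u v ∧ ¬ SimonCong (m + 1) u v := by
  have hB : (u.length + 1) ∈ {k : ℕ | ¬ SimonCong k u v} := by
    intro h
    exact hne (simon_eq_of_length_succ h).symm
  set B := {k : ℕ | ¬ SimonCong k u v}
  have hBne : B.Nonempty := ⟨_, hB⟩
  have h0 : 0 ∉ B := fun h => h (simon_zero u v)
  have hmem := Nat.sInf_mem hBne
  have hpos : 1 ≤ sInf B := by
    rcases Nat.eq_zero_or_pos (sInf B) with h | h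
    · exact absurd (h ▸ hmem) h0
    · exact h
  refine ⟨sInf B - 1, ?_, ?_⟩
  · by_contra h
    have : sInf B ≤ sInf B - 1 := Nat.sInf_le h
    omega
  · have : sInf B - 1 + 1 = sInf B := by omega
    rw [this]
    exact hmem

lemma sdelta_eq_coe {u v : List A} {m : ℕ} (hm : SimonCong m u v)
    (hm' : ¬ SimonCong (m + 1) u v) : sdelta u v = (m : ℕ∞) := by
  apply _root_.le_antisymm
  · apply sSup_le
    rintro d ⟨k, rfl, hk⟩
    have hkm : k ≤ m := by
      by_contra h
      exact hm' (simon_mono (by omega) hk)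
    exact_mod_cast hkm
  · exact le_sSup ⟨m, rfl, hm⟩

/-- Additivity: `δ(u₁u₂, u₁cu₂) = r(u₁,c) + ℓ(c,u₂)`. -/
lemma sdelta_insert (u₁ u₂ : List A) (c : A) :
    sdelta (u₁ ++ u₂) (u₁ ++ [c] ++ u₂) = rdist u₁ [c] + ldist [c] u₂ := by
  obtain ⟨m₁, hm₁, hm₁'⟩ := exists_exact (u := u₁) (v := u₁ ++ [c]) (by simp)
  obtain ⟨m₂, hm₂, hm₂'⟩ := exists_exact (u := ([c] ++ u₂)) (v := u₂) (by simp)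
  rw [List.singleton_append] at hm₂ hm₂'
  have hr : rdist u₁ [c] = (m₁ : ℕ∞) := sdelta_eq_coe hm₁ hm₁'
  have hl : ldist [c] u₂ = (m₂ : ℕ∞) := by
    unfold ldist
    rw [List.singleton_append]
    exact sdelta_eq_coe hm₂ hm₂'
  rw [hr, hl]
  -- main congruence holds at m₁ + m₂
  have hmain : SimonCong (m₁ + m₂) (u₁ ++ u₂) (u₁ ++ [c] ++ u₂) := by
    rw [insert_iff]
    intro s t hs ht hlen
    rcases lt_or_ge s.length m₁ with h | h
    · have := (rchar.mp hm₁) s hs h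
      have h2 : (s ++ c :: t).Sublist (u₁ ++ u₂) := by
        have : ((s ++ [c]) ++ t).Sublist (u₁ ++ u₂) := this.append ht
        simpa using this
      exact h2
    · have htl : t.length < m₂ := by omega
      have := (lchar.mp hm₂) t ht htl
      exact hs.append this
  -- and fails at m₁ + m₂ + 1
  have hfail : ¬ SimonCong (m₁ + m₂ + 1) (u₁ ++ u₂) (u₁ ++ [c] ++ u₂) := by
    rw [insert_iff]
    intro H
    rw [rchar] at hm₁'
    push_neg at hm₁'
    obtain ⟨s, hs, hslen, hsbad⟩ := hm₁'
    rw [lchar] at hm₂'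
    push_neg at hm₂'
    obtain ⟨t, ht, htlen, htbad⟩ := hm₂'
    have := H s t hs ht (by omega)
    rcases split_mid this with h | h
    · exact hsbad h
    · exact htbad h
  rw [sdelta_eq_coe hmain hfail]
  exact_mod_cast rfl

/-- Duplication lemma: if deleting `c` is invisible at level `n`,
then duplicating it is too. -/
lemma simon_dup {n : ℕ} {u₁ u₂ : List A} {c : A}
    (h : SimonCong n (u₁ ++ u₂) (u₁ ++ [c] ++ u₂)) :
    SimonCong n ((u₁ ++ [c]) ++ u₂) ((u₁ ++ [c]) ++ [c] ++ u₂) := by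
  rw [insert_iff] at h ⊢
  intro s t hs ht hlen
  have hsub : (u₁ ++ u₂).Sublist ((u₁ ++ [c]) ++ u₂) := by
    rw [List.append_assoc, List.singleton_append]
    exact List.Sublist.append (List.Sublist.refl u₁) ((List.Sublist.refl u₂).cons c)
  rcases sublist_snoc_destruct hs with hs' | ⟨s₀, rfl, hs₀⟩
  · exact (h s t hs' ht hlen).trans hsub
  · have hlen₀ : s₀.length + t.length < n := by simp at hlen; omega
    have h1 := h s₀ t hs₀ ht hlen₀
    rcases split_mid h1 with h' | h'
    · have h2 := h (s₀ ++ [c]) t h' ht (by simpa using hlen)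
      have : ((s₀ ++ [c]) ++ c :: t).Sublist ((u₁ ++ [c]) ++ u₂) := h2.trans hsub
      exact this
    · exact hs.append h'

/-- Key two-sided alignment lemma. -/
lemma simon_altAux {n : ℕ} {p x y s₁ t₁ t₂ : List A} {a b : A} {m₂ : ℕ}
    (h : SimonCong n (p ++ a :: x) (p ++ b :: y)) (hab : a ≠ b)
    (hs₁ : s₁.Sublist p) (ht₂ : t₂.Sublist (a :: x)) (hle : s₁.length ≤ m₂)
    (hlen₂ : m₂ + t₂.length < n) (ht₁ : t₁.Sublist (b :: y))
    (hbad₁ : ¬ (s₁ ++ a :: t₁).Sublist (p ++ b :: y)) (hF2 : ¬ t₂.Sublist y) : False := by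
  obtain ⟨τ, hτx, ht₂τ, hτlen⟩ := exists_tau ht₂
  have hq : (s₁ ++ a :: τ).Sublist (p ++ a :: x) := hs₁.append (hτx.cons₂ a)
  have hql : (s₁ ++ a :: τ).length ≤ n := by simp; omega
  have hq' : (s₁ ++ a :: τ).Sublist (p ++ b :: y) := (h _ hql).mp hq
  rcases split_mid hq' with h' | h'
  · apply hbad₁
    have : ((s₁ ++ [a]) ++ t₁).Sublist (p ++ b :: y) := h'.append ht₁
    simpa using this
  · exact hF2 (ht₂τ.trans (cons_sublist_of_ne h' hab))

lemma simon_alt {n : ℕ} {p x y : List A} {a b : A}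
    (h : SimonCong n (p ++ a :: x) (p ++ b :: y)) (hab : a ≠ b) :
    SimonCong n (p ++ b :: y) (p ++ [a] ++ (b :: y)) ∨
    SimonCong n (p ++ a :: x) (p ++ [b] ++ (a :: x)) := by
  by_contra hcon
  push_neg at hcon
  obtain ⟨h1, h2⟩ := hcon
  rw [insert_iff] at h1 h2
  push_neg at h1 h2
  obtain ⟨s₁, t₁, hs₁, ht₁, hlen₁, hbad₁⟩ := h1
  obtain ⟨s₂, t₂, hs₂, ht₂, hlen₂, hbad₂⟩ := h2
  have hF1 : ¬ t₁.Sublist x := by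
    intro hh
    apply hbad₁
    have hsub : (s₁ ++ a :: t₁).Sublist (p ++ a :: x) := hs₁.append (hh.cons₂ a)
    exact (h _ (by simp; omega)).mp hsub
  have hF2 : ¬ t₂.Sublist y := by
    intro hh
    apply hbad₂
    have hsub : (s₂ ++ b :: t₂).Sublist (p ++ b :: y) := hs₂.append (hh.cons₂ b)
    exact (h _ (by simp; omega)).mpr hsub
  rcases le_total s₁.length s₂.length with hle | hle
  · exact simon_altAux h hab hs₁ ht₂ hle (by omega) ht₁ hbad₁ hF2
  · exact simon_altAux (simon_symm h) (Ne.symm hab) hs₂ ht₁ hle (by omega) ht₂ hbad₂ hF1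

/-- Simon's join lemma, with a context. -/
lemma simon_joinAux {n : ℕ} : ∀ (N : ℕ) (u v p : List A), u.length + v.length ≤ N →
    SimonCong n (p ++ u) (p ++ v) →
    ∃ w, u.Sublist w ∧ v.Sublist w ∧ SimonCong n (p ++ u) (p ++ w) := by
  intro N
  induction N with
  | zero =>
    intro u v p hlen h
    have hu : u = [] := by
      cases u with | nil => rfl | cons a u => simp at hlen
    have hv : v = [] := by
      cases v with | nil => rfl | cons a v => simp at hlen
    subst hu; subst hv
    exact ⟨[], List.Sublist.refl _, List.Sublist.refl _, h⟩
  | succ N ih =>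
    intro u v p hlen h
    cases u with
    | nil => exact ⟨v, List.nil_sublist v, List.Sublist.refl v, h⟩
    | cons a u' =>
      cases v with
      | nil => exact ⟨a :: u', List.Sublist.refl _, List.nil_sublist _, simon_refl n _⟩
      | cons b v' =>
        by_cases hab : a = b
        · subst hab
          have h' : SimonCong n ((p ++ [a]) ++ u') ((p ++ [a]) ++ v') := by
            simpa [List.append_assoc] using h
          obtain ⟨w₁, hw1, hw2, hw3⟩ := ih u' v' (p ++ [a]) (by simp at hlen ⊢; omega) h'
          refine ⟨a :: w₁, hw1.cons₂ a, hw2.cons₂ a, ?_⟩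
          simpa [List.append_assoc] using hw3
        · rcases simon_alt h hab with halt | halt
          · -- p ++ a :: b :: v' is congruent; absorb into the a-side
            have h'' : SimonCong n ((p ++ [a]) ++ u') ((p ++ [a]) ++ (b :: v')) := by
              have h2 : SimonCong n (p ++ a :: u') (p ++ [a] ++ (b :: v')) :=
                simon_trans h halt
              simpa [List.append_assoc] using h2
            obtain ⟨w₁, hw1, hw2, hw3⟩ := ih u' (b :: v') (p ++ [a])
              (by simp at hlen ⊢; omega) h''
            refine ⟨a :: w₁, hw1.cons₂ a, hw2.cons a, ?_⟩
            simpa [List.append_assoc] using hw3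
          · have h'' : SimonCong n ((p ++ [b]) ++ v') ((p ++ [b]) ++ (a :: u')) := by
              have h2 : SimonCong n (p ++ b :: v') (p ++ [b] ++ (a :: u')) :=
                simon_trans (simon_symm h) halt
              simpa [List.append_assoc] using h2
            obtain ⟨w₂, hw1, hw2, hw3⟩ := ih v' (a :: u') (p ++ [b])
              (by simp at hlen ⊢; omega) h''
            refine ⟨b :: w₂, hw2.cons b, hw1.cons₂ b, ?_⟩
            have : SimonCong n (p ++ b :: v') (p ++ b :: w₂) := by
              simpa [List.append_assoc] using hw3
            exact simon_trans h this

/-- Simon's join lemma: equivalent words have an equivalent common superword. -/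
lemma simon_join {n : ℕ} {u v : List A} (h : SimonCong n u v) :
    ∃ w, u.Sublist w ∧ v.Sublist w ∧ SimonCong n u w := by
  have := simon_joinAux (u.length + v.length) u v [] (le_refl _) (by simpa using h)
  simpa using this

/-- Key step: a nontrivial congruence class yields a congruent one-letter insertion. -/
lemma exists_insert_cong (n : ℕ) {u v : List A} (hne : v ≠ u) (h : SimonCong n u v) :
    ∃ (u₁ u₂ : List A) (c : A), u = u₁ ++ u₂ ∧ SimonCong n u (u₁ ++ [c] ++ u₂) := by
  obtain ⟨w, huw, hvw, hw⟩ := simon_join h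
  by_cases hwu : w = u
  · rw [hwu] at hvw
    -- v is a strict subword of u
    have hvu : v.length < u.length := by
      rcases lt_or_eq_of_le hvw.length_le with h' | h'
      · exact h'
      · exact absurd (hvw.eq_of_length h') hne
    obtain ⟨v', hv1, hv2, hv3⟩ := sublist_exists_between hvw (u.length - 1) (by omega) (by omega)
    have hcong' : SimonCong n u v' :=
      simon_trans h (simon_sandwich hv1 hv2 (simon_symm h))
    obtain ⟨u₁, u₂, c, hv'eq, hueq⟩ := exists_insert_of_sublist_succ hv2 (by omega)
    have hd : SimonCong n (u₁ ++ u₂) (u₁ ++ [c] ++ u₂) := by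
      rw [app_singl]
      rw [hueq, hv'eq] at hcong'
      exact simon_symm hcong'
    have := simon_dup hd
    refine ⟨u₁ ++ [c], u₂, c, by rw [hueq]; simp, ?_⟩
    have hu' : u = (u₁ ++ [c]) ++ u₂ := by rw [hueq]; simp
    rw [hu']
    exact this
  · -- u is a strict subword of w
    have huwlt : u.length < w.length := by
      rcases lt_or_eq_of_le huw.length_le with h' | h'
      · exact h'
      · exact absurd (huw.eq_of_length h') (fun he => hwu he.symm)
    obtain ⟨w', h1, h2, h3⟩ := sublist_exists_between huw (u.length + 1) (by omega) (by omega)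
    have hcong' : SimonCong n u w' := simon_sandwich h1 h2 hw
    obtain ⟨u₁, u₂, c, hueq, hw'eq⟩ := exists_insert_of_sublist_succ h1 h3
    refine ⟨u₁, u₂, c, hueq, ?_⟩
    rw [app_singl, ← hw'eq]
    exact hcong'

end Aux

/-- characterisations of the piecewise complexity `h(u)`. -/
theorem stmt0 {A : Type*} [Fintype A] [Nonempty A] (u : List A) :
    (pcHeight u : ℕ∞) =
      1 + sSup {d : ℕ∞ | ∃ (u₁ u₂ : List A) (a : A),
          u = u₁ ++ u₂ ∧ d = sdelta u (u₁ ++ [a] ++ u₂)} ∧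
    (pcHeight u : ℕ∞) =
      1 + sSup {d : ℕ∞ | ∃ (u₁ u₂ : List A) (a : A),
          u = u₁ ++ u₂ ∧ d = rdist u₁ [a] + ldist [a] u₂} := by
  classical
  have hsets : {d : ℕ∞ | ∃ (u₁ u₂ : List A) (a : A),
          u = u₁ ++ u₂ ∧ d = sdelta u (u₁ ++ [a] ++ u₂)} =
      {d : ℕ∞ | ∃ (u₁ u₂ : List A) (a : A),
          u = u₁ ++ u₂ ∧ d = rdist u₁ [a] + ldist [a] u₂} := by
    ext d
    constructor
    · rintro ⟨u₁, u₂, a, hu, hd⟩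
      refine ⟨u₁, u₂, a, hu, ?_⟩
      rw [hd, hu, sdelta_insert]
    · rintro ⟨u₁, u₂, a, hu, hd⟩
      refine ⟨u₁, u₂, a, hu, ?_⟩
      rw [hd, hu, sdelta_insert]
  have main : (pcHeight u : ℕ∞) =
      1 + sSup {d : ℕ∞ | ∃ (u₁ u₂ : List A) (a : A),
          u = u₁ ++ u₂ ∧ d = sdelta u (u₁ ++ [a] ++ u₂)} := by
    set G := {n : ℕ | ∀ v : List A, SimonCong n u v → v = u} with hG
    have hGmem : (u.length + 1) ∈ G := fun v hv => simon_eq_of_length_succ hv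
    have hGne : G.Nonempty := ⟨_, hGmem⟩
    have hph : pcHeight u = sInf G := rfl
    set n₀ := sInf G with hn₀
    have hn₀G : n₀ ∈ G := Nat.sInf_mem hGne
    have h0G : 0 ∉ G := by
      intro h0
      have := h0 (u ++ [Classical.arbitrary A]) (simon_zero _ _)
      have := congrArg List.length this
      simp at this
    have hn₀pos : 1 ≤ n₀ := by
      rcases Nat.eq_zero_or_pos n₀ with h | h
      · exact absurd (h ▸ hn₀G) h0G
      · exact h
    have hnotG : (n₀ - 1) ∉ G := by
      intro hmem
      have := Nat.sInf_le hmem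
      omega
    -- extract a congruent insertion at level n₀ - 1
    have hex : ∃ v : List A, SimonCong (n₀ - 1) u v ∧ v ≠ u := by
      by_contra hc
      push_neg at hc
      exact hnotG (fun v hv => hc v hv)
    obtain ⟨v, hv, hvne⟩ := hex
    obtain ⟨u₁, u₂, c, hu12, hins⟩ := exists_insert_cong (n₀ - 1) hvne hv
    -- the sup set
    set S := {d : ℕ∞ | ∃ (u₁ u₂ : List A) (a : A),
          u = u₁ ++ u₂ ∧ d = sdelta u (u₁ ++ [a] ++ u₂)} with hS
    have hne_ins : ∀ (w₁ w₂ : List A) (e : A), u = w₁ ++ w₂ → u ≠ w₁ ++ [e] ++ w₂ := by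
      intro w₁ w₂ e hw heq
      have := congrArg List.length heq
      rw [hw] at this
      simp at this
    have hub : ∀ d ∈ S, d ≤ ((n₀ - 1 : ℕ) : ℕ∞) := by
      rintro d ⟨w₁, w₂, e, hw, rfl⟩
      obtain ⟨m, hm, hm'⟩ := exists_exact (hne_ins w₁ w₂ e hw)
      rw [sdelta_eq_coe hm hm']
      have hmlt : m < n₀ := by
        by_contra hc
        push_neg at hc
        have : SimonCong n₀ u (w₁ ++ [e] ++ w₂) := simon_mono hc hm
        exact hne_ins w₁ w₂ e hw (hn₀G _ this).symm
      exact_mod_cast (by omega : m ≤ n₀ - 1)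
    have hlb : ((n₀ - 1 : ℕ) : ℕ∞) ≤ sSup S := by
      obtain ⟨m, hm, hm'⟩ := exists_exact (hne_ins u₁ u₂ c hu12)
      have hmge : n₀ - 1 ≤ m := by
        by_contra hc
        push_neg at hc
        exact hm' (simon_mono (by omega) hins)
      calc ((n₀ - 1 : ℕ) : ℕ∞) ≤ (m : ℕ∞) := by exact_mod_cast hmge
        _ = sdelta u (u₁ ++ [c] ++ u₂) := (sdelta_eq_coe hm hm').symm
        _ ≤ sSup S := le_sSup ⟨u₁, u₂, c, hu12, rfl⟩
    have hsup : sSup S = ((n₀ - 1 : ℕ) : ℕ∞) := le_antisymm (sSup_le hub) hlb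
    rw [hph, hsup]
    rw [show ((1 : ℕ∞) + ((n₀ - 1 : ℕ) : ℕ∞)) = (((1 + (n₀ - 1) : ℕ)) : ℕ∞) by
      push_cast; ring]
    congr 1
    omega
  exact ⟨main, by rw [main, hsets]⟩
end

section
/- For all words u, v over a finite alphabet, ρ(u·v) ≤ ρ(u) + ρ(v). -/
variable {A : Type*}

namespace Stmt4Aux
open List

lemma simonCong_symm {k : ℕ} {u v : List A} (h : SimonCong k u v) : SimonCong k v u :=
  fun s hs => (h s hs).symm

lemma simonCong_mono {k k' : ℕ} (hk : k' ≤ k) {u v : List A} (h : SimonCong k u v) :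
    SimonCong k' u v := fun s hs => h s (hs.trans hk)

lemma simonCong_reverse {k : ℕ} {u v : List A} (h : SimonCong k u v) :
    SimonCong k u.reverse v.reverse := by
  intro s hs
  have := h s.reverse (by simpa using hs)
  constructor
  · intro hsu
    have : s.reverse <+ v := this.mp (by simpa using List.reverse_sublist.mpr hsu)
    simpa using List.reverse_sublist.mpr this
  · intro hsv
    have : s.reverse <+ u := this.mpr (by simpa using List.reverse_sublist.mpr hsv)
    simpa using List.reverse_sublist.mpr this

lemma reduced_reverse {m : ℕ} {u : List A} (h : Reduced m u) : Reduced m u.reverse := by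
  intro u' hsub hne hcong
  refine h u'.reverse ?_ ?_ ?_
  · have := List.reverse_sublist.mpr hsub
    simpa using this
  · intro he
    exact hne (by rw [← he, List.reverse_reverse])
  · have := simonCong_reverse hcong
    simpa using this

lemma reduced_length (u : List A) : Reduced u.length u := by
  intro u' hsub hne hcong
  have h1 : u <+ u' := (hcong u le_rfl).mp (List.Sublist.refl u)
  exact hne (h1.antisymm hsub).symm

lemma reduced_rho (u : List A) : Reduced (pcRho u) u := by
  have : {m : ℕ | Reduced m u}.Nonempty := ⟨u.length, reduced_length u⟩
  exact Nat.sInf_mem this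

lemma length_lt_of_ssub {l₁ l₂ : List A} (h : l₁ <+ l₂) (h2 : l₁ ≠ l₂) :
    l₁.length < l₂.length := by
  rcases Nat.lt_or_ge l₁.length l₂.length with h3 | h3
  · exact h3
  · exact absurd (h.eq_of_length (le_antisymm h.length_le h3)) h2

lemma transfer {k : ℕ} {z z' r : List A} (h : SimonCong k z z')
    (hz : ∀ c ∈ z, c ∈ r) :
    ∀ s : List A, s.length ≤ k + 1 → s <+ z ++ r → s <+ z' ++ r := by
  intro s hs hsub
  obtain ⟨P, Q, rfl, hP, hQ⟩ := List.sublist_append_iff.mp hsub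
  rcases eq_or_ne Q [] with rfl | hQne
  · rw [List.append_nil] at *
    rcases List.eq_nil_or_concat P with rfl | ⟨s₀, c, rfl⟩
    · exact List.nil_sublist _
    · rw [List.concat_eq_append] at *
      have hs₀ : s₀ <+ z := (List.sublist_append_left s₀ [c]).trans hP
      have hs₀' : s₀ <+ z' := (h s₀ (by simp at hs ⊢; omega)).mp hs₀
      have hc : c ∈ z := hP.subset (by simp)
      exact hs₀'.append (List.singleton_sublist.mpr (hz c hc))
  · have hPlen : P.length ≤ k := by
      have : 1 ≤ Q.length := List.length_pos_iff.mpr hQne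
      have h2 := hs
      simp only [List.length_append] at h2
      omega
    exact (((h P hPlen).mp hP).append hQ)

lemma simonCong_append_arch {k : ℕ} {z z' r : List A} (h : SimonCong k z z')
    (hz : ∀ c ∈ z, c ∈ r) (hz' : ∀ c ∈ z', c ∈ r) :
    SimonCong (k + 1) (z ++ r) (z' ++ r) := by
  intro s hs
  exact ⟨fun hh => transfer h hz s hs hh, fun hh => transfer (simonCong_symm h) hz' s hs hh⟩

lemma q_nil {Q₀ r' : List A} {a : A} (h : Q₀ ++ [a] <+ a :: r') (ha : a ∉ r') : Q₀ = [] := by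
  rcases List.sublist_cons_iff.mp h with h1 | ⟨l', hl', hl's⟩
  · exact absurd (h1.subset (by simp)) ha
  · cases Q₀ with
    | nil => rfl
    | cons q Q₁ =>
      rw [List.cons_append] at hl'
      injection hl' with h2 h3
      exact absurd (hl's.subset (h3 ▸ (by simp : a ∈ Q₁ ++ [a]))) ha

lemma simonCong_zero (v : List A) : SimonCong 0 v [] := by
  intro s hs
  have : s = [] := List.length_eq_zero_iff.mp (Nat.le_zero.mp hs)
  subst this
  simp

lemma blocker_aux : ∀ (N : ℕ) (v : List A), v.length ≤ N →
    ∃ t : List A, t <+ v ∧ (∀ b : A, ¬ (b :: t) <+ v) ∧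
      (t = [] ∨ ∃ w : List A, w <+ v ∧ w ≠ v ∧ SimonCong (t.length - 1) v w) := by
  intro N
  induction N with
  | zero =>
    intro v hv
    have : v = [] := List.length_eq_zero_iff.mp (Nat.le_zero.mp hv)
    subst this
    exact ⟨[], List.nil_sublist _, fun b hb => by simpa using hb.length_le, Or.inl rfl⟩
  | succ N ih =>
    intro v hv
    rcases eq_or_ne v [] with rfl | hvne
    · exact ⟨[], List.nil_sublist _, fun b hb => by simpa using hb.length_le, Or.inl rfl⟩
    set S : Set ℕ := {i | ∃ c ∈ v, c ∉ v.drop (i + 1)} with hS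
    have hSne : S.Nonempty := by
      refine ⟨v.length - 1, v.head hvne, List.head_mem hvne, ?_⟩
      have hd : v.drop (v.length - 1 + 1) = [] := by
        apply List.drop_eq_nil_of_le
        have : 0 < v.length := List.length_pos_iff.mpr hvne
        omega
      simp [hd]
    set i := sInf S with hi
    have himem : ∃ c ∈ v, c ∉ v.drop (i + 1) := Nat.sInf_mem hSne
    have hall : ∀ c ∈ v, c ∈ v.drop i := by
      intro c hc
      rcases Nat.eq_zero_or_pos i with h0 | hpos
      · simpa [h0] using hc
      · have hj : i - 1 ∉ S := fun hmem => by
          have := Nat.sInf_le hmem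
          omega
        simp only [hS, Set.mem_setOf_eq, not_exists] at hj
        push_neg at hj
        have h2 := hj c hc
        have heq : i - 1 + 1 = i := by omega
        rwa [heq] at h2
    have hrne : v.drop i ≠ [] := by
      intro hrn
      obtain ⟨c, hc, hcn⟩ := himem
      have h2 := hall c hc
      rw [hrn] at h2
      simp at h2
    set r := v.drop i with hr
    set z := v.take i with hz
    have hvzr : v = z ++ r := (List.take_append_drop i v).symm
    have hzlen : z.length ≤ N := by
      have hilt : i < v.length := by
        by_contra hge
        exact hrne (List.drop_eq_nil_of_le (by omega))
      have h2 : z.length = i := by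
        rw [hz, List.length_take]
        omega
      omega
    obtain ⟨a, r', hrcons⟩ := List.exists_cons_of_ne_nil hrne
    have har' : a ∉ r' := by
      obtain ⟨c, hc, hcn⟩ := himem
      have hcr : c ∈ r := hall c hc
      have htd : v.drop (i + 1) = r' := by
        have h2 : (v.drop i).tail = v.drop (i + 1) := List.tail_drop
        rw [← hr, hrcons] at h2
        simp only [List.tail_cons] at h2
        exact h2.symm
      rw [hrcons] at hcr
      rcases List.mem_cons.mp hcr with rfl | hcr'
      · rwa [htd] at hcn
      · exact absurd (htd ▸ hcr') hcn
    have hzr : ∀ c ∈ z, c ∈ r := fun c hc =>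
      hall c (by rw [hvzr]; exact List.mem_append_left r hc)
    obtain ⟨t', ht'sub, ht'block, ht'disj⟩ := ih z hzlen
    refine ⟨t' ++ [a], ?_, ?_, ?_⟩
    · rw [hvzr]
      exact ht'sub.append (List.singleton_sublist.mpr (hrcons ▸ (List.mem_cons_self : a ∈ a :: r')))
    · intro b hb
      rw [hvzr] at hb
      have hb' : (b :: t') ++ [a] <+ z ++ r := by simpa using hb
      obtain ⟨P, Q, hPQ, hP, hQ⟩ := List.sublist_append_iff.mp hb'
      rcases List.eq_nil_or_concat Q with rfl | ⟨Q₀, c, rfl⟩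
      · rw [List.append_nil] at hPQ
        subst hPQ
        exact ht'block b ((List.sublist_append_left (b :: t') [a]).trans hP)
      · rw [List.concat_eq_append] at hQ hPQ
        rw [← List.append_assoc] at hPQ
        obtain ⟨hPQ₀, hca⟩ := List.append_inj' hPQ (by simp)
        have hceq : a = c := by simpa using hca
        subst hceq
        rw [hrcons] at hQ
        have hQ₀ : Q₀ = [] := q_nil hQ har'
        subst hQ₀
        rw [List.append_nil] at hPQ₀
        subst hPQ₀
        exact ht'block b hP
    · right
      by_cases ht'e : t' = []
      · refine ⟨[], List.nil_sublist _, Ne.symm hvne, ?_⟩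
        have : (t' ++ [a]).length - 1 = 0 := by simp [ht'e]
        rw [this]
        exact simonCong_zero v
      · rcases ht'disj with h | ⟨w₀, hw₀sub, hw₀ne, hw₀cong⟩
        · exact absurd h ht'e
        refine ⟨w₀ ++ r, ?_, ?_, ?_⟩
        · rw [hvzr]; exact hw₀sub.append (List.Sublist.refl r)
        · intro he
          have h1 : w₀.length < z.length := length_lt_of_ssub hw₀sub hw₀ne
          have h2 := congrArg List.length he
          rw [hvzr] at h2
          simp only [List.length_append] at h2
          omega
        · have hlen : (t' ++ [a]).length - 1 = (t'.length - 1) + 1 := by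
            have : 0 < t'.length := List.length_pos_iff.mpr ht'e
            simp only [List.length_append, List.length_cons, List.length_nil]
            omega
          rw [hvzr, hlen]
          exact simonCong_append_arch hw₀cong hzr
            (fun c hc => hzr c (hw₀sub.subset hc))

lemma blocker (v : List A) : ∃ t : List A, t <+ v ∧ (∀ b : A, ¬ (b :: t) <+ v) ∧
    ∀ n : ℕ, Reduced n v → t.length ≤ n := by
  obtain ⟨t, hsub, hblock, hdisj⟩ := blocker_aux v.length v le_rfl
  refine ⟨t, hsub, hblock, ?_⟩
  intro n hn
  rcases hdisj with rfl | ⟨w, hwsub, hwne, hwcong⟩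
  · simp
  by_contra hlt
  push_neg at hlt
  exact hn w hwsub (Ne.symm (fun he => hwne he.symm))
    (simonCong_mono (by omega) hwcong)


lemma main1 {m n : ℕ} {u v u' v' s t : List A}
    (hu' : u' <+ u) (hv' : v' <+ v)
    (hs : s <+ u) (hsn : ¬ s <+ u') (hslen : s.length ≤ m)
    (ht : t <+ v) (htlen : t.length ≤ n) (htb : ∀ b : A, ¬ (b :: t) <+ v)
    (hc : SimonCong (m + n) (u ++ v) (u' ++ v')) : False := by
  have hW : s ++ t <+ u ++ v := hs.append ht
  have hWlen : (s ++ t).length ≤ m + n := by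
    simp only [List.length_append]; omega
  have hW' : s ++ t <+ u' ++ v' := (hc (s ++ t) hWlen).mp hW
  obtain ⟨P, Q, hPQ, hP, hQ⟩ := List.sublist_append_iff.mp hW'
  rcases Nat.lt_or_ge P.length s.length with hlt | hge
  · -- Q contains b :: (rest ++ t)
    have hQeq : Q = s.drop P.length ++ t := by
      have := congrArg (List.drop P.length) hPQ
      rw [List.drop_append_of_le_length (by omega), List.drop_left] at this
      exact this.symm
    have hdne : s.drop P.length ≠ [] := by
      intro he
      have := congrArg List.length he
      simp only [List.length_drop, List.length_nil] at this
      omega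
    obtain ⟨b, rest, hbr⟩ := List.exists_cons_of_ne_nil hdne
    have hbt : b :: t <+ Q := by
      rw [hQeq, hbr, List.cons_append]
      exact List.cons_sublist_cons.mpr (List.sublist_append_right rest t)
    exact htb b ((hbt.trans hQ).trans hv')
  · -- s is a prefix of P
    have hsP : s <+ P := by
      have h1 := congrArg (List.take s.length) hPQ
      rw [List.take_left, List.take_append_of_le_length hge] at h1
      exact h1 ▸ (List.take_sublist s.length P)
    exact hsn (hsP.trans hP)

lemma witness_of_not_simonCong {m : ℕ} {x x' : List A} (hsub : x' <+ x)
    (h : ¬ SimonCong m x x') : ∃ s : List A, s.length ≤ m ∧ s <+ x ∧ ¬ s <+ x' := by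
  unfold SimonCong at h
  push_neg at h
  obtain ⟨s, hslen, hsiff⟩ := h
  rcases hsiff with ⟨h1, h2⟩ | ⟨h1, h2⟩
  · exact ⟨s, hslen, h1, h2⟩
  · exact absurd (h2.trans hsub) h1

theorem main {A : Type*} (u v : List A) :
    pcRho (u ++ v) ≤ pcRho u + pcRho v := by
  set m := pcRho u with hm
  set n := pcRho v with hn
  have hu : Reduced m u := reduced_rho u
  have hv : Reduced n v := reduced_rho v
  have hred : Reduced (m + n) (u ++ v) := by
    intro w hw hne hc
    obtain ⟨u', v', rfl, hu', hv'⟩ := List.sublist_append_iff.mp hw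
    by_cases hcase : u' = u
    · subst hcase
      have hvne : v' ≠ v := fun he => hne (by rw [he])
      obtain ⟨s, hslen, hssub, hsn⟩ := witness_of_not_simonCong hv' (hv v' hv' hvne)
      obtain ⟨t, htsub, htb, htbound⟩ := blocker u'.reverse
      have htlen : t.length ≤ m := htbound m (reduced_reverse hu)
      have hcrev : SimonCong (n + m) (v.reverse ++ u'.reverse) (v'.reverse ++ u'.reverse) := by
        have := simonCong_reverse hc
        simp only [List.reverse_append] at this
        rwa [Nat.add_comm] at this
      refine main1 (u := v.reverse) (v := u'.reverse) (u' := v'.reverse) (v' := u'.reverse)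
        (s := s.reverse) (t := t) ?_ (List.Sublist.refl _) ?_ ?_ ?_ htsub htlen htb hcrev
      · exact List.reverse_sublist.mpr hv'
      · exact List.reverse_sublist.mpr hssub
      · intro hcon
        exact hsn (by simpa using List.reverse_sublist.mpr hcon)
      · simpa using hslen
    · obtain ⟨s, hslen, hssub, hsn⟩ := witness_of_not_simonCong hu' (hu u' hu' hcase)
      obtain ⟨t, htsub, htb, htbound⟩ := blocker v
      have htlen : t.length ≤ n := htbound n hv
      exact main1 hu' hv' hssub hsn hslen htsub htlen htb hc
  calc pcRho (u ++ v) ≤ m + n := Nat.sInf_le hred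
    _ = pcRho u + pcRho v := rfl

end Stmt4Aux


/-- convexity of `ρ` w.r.t. concatenation. -/
theorem stmt4 {A : Type*} [Fintype A] (u v : List A) :
    pcRho (u ++ v) ≤ pcRho u + pcRho v :=
  Stmt4Aux.main u v
end

section
/- For all words u, v over a finite alphabet, h(u·v) ≤ max{ h(u) + ρ(v), ρ(u) + h(v) }. -/
variable {A : Type*}

namespace Stmt5Aux
open List

theorem simonCong_zero (u v : List A) : SimonCong 0 u v := by
  intro s hs
  have : s = [] := List.eq_nil_of_length_eq_zero (Nat.le_zero.mp hs)
  subst this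
  simp

theorem simonCong_mono {m n : ℕ} {u v : List A} (h : SimonCong n u v) (hmn : m ≤ n) :
    SimonCong m u v := fun s hs => h s (hs.trans hmn)

theorem simonCong_symm {n : ℕ} {u v : List A} (h : SimonCong n u v) : SimonCong n v u :=
  fun s hs => (h s hs).symm

theorem simonCong_trans {n : ℕ} {u v w : List A} (h1 : SimonCong n u v) (h2 : SimonCong n v w) :
    SimonCong n u w := fun s hs => (h1 s hs).trans (h2 s hs)

theorem simonCong_refl (n : ℕ) (u : List A) : SimonCong n u u := fun _ _ => Iff.rfl

theorem wit_of_not {n : ℕ} {x y : List A} (hxy : x <+ y) (h : ¬ SimonCong n x y) :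
    ∃ s : List A, s.length ≤ n ∧ s <+ y ∧ ¬ s <+ x := by
  unfold SimonCong at h
  push_neg at h
  obtain ⟨s, hs, hiff⟩ := h
  rcases hiff with ⟨h1, h2⟩ | ⟨h1, h2⟩
  · exact absurd (h1.trans hxy) h2
  · exact ⟨s, hs, h2, h1⟩

theorem dicho {P Q X Y : List A} {d : A} (h : P ++ d :: Q <+ X ++ Y) :
    P ++ [d] <+ X ∨ d :: Q <+ Y := by
  rw [List.sublist_append_iff] at h
  obtain ⟨m, nn, heq, hm, hn⟩ := h
  by_cases hl : P.length + 1 ≤ m.length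
  · left
    have hpre : P ++ [d] <+: P ++ d :: Q := ⟨Q, by simp⟩
    have hmp : m <+: P ++ d :: Q := ⟨nn, heq.symm⟩
    have := List.prefix_of_prefix_length_le hpre hmp (by simpa using hl)
    exact this.sublist.trans hm
  · right
    have hsuf : d :: Q <:+ P ++ d :: Q := ⟨P, rfl⟩
    have hns : nn <:+ P ++ d :: Q := ⟨m, heq.symm⟩
    have hlen : (d :: Q).length ≤ nn.length := by
      have := congrArg List.length heq
      simp at this ⊢
      omega
    exact (List.suffix_of_suffix_length_le hsuf hns hlen).sublist.trans hn

theorem lemext {S T X Y' : List A} {b : A} (h : S ++ T <+ X ++ b :: Y') :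
    S <+ X ∨ T <+ Y' := by
  rw [List.sublist_append_iff] at h
  obtain ⟨m, nn, heq, hm, hn⟩ := h
  by_cases hl : S.length ≤ m.length
  · left
    have hpre : S <+: S ++ T := ⟨T, rfl⟩
    have hmp : m <+: S ++ T := ⟨nn, heq.symm⟩
    exact (List.prefix_of_prefix_length_le hpre hmp hl).sublist.trans hm
  · right
    have hlen0 := congrArg List.length heq
    simp at hlen0
    have hsuf : T <:+ S ++ T := ⟨S, rfl⟩
    have hns : nn <:+ S ++ T := ⟨m, heq.symm⟩
    have hTn : T <:+ nn := List.suffix_of_suffix_length_le hsuf hns (by omega)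
    cases nn with
    | nil =>
      rw [List.suffix_nil] at hTn
      subst hTn
      exact List.nil_sublist Y'
    | cons e n' =>
      obtain ⟨t, ht⟩ := hTn
      have hn' : n' <+ Y' := by
        cases hn with
        | cons _ h' => exact (List.sublist_cons_self e n').trans h'
        | cons_cons _ h' => exact h'
      cases t with
      | nil =>
        simp only [List.nil_append] at ht
        subst ht
        simp at hlen0
        omega
      | cons e' t' =>
        have hteq : t' ++ T = n' := by
          have := congrArg List.tail ht
          simpa using this
        have hsfx : T <:+ n' := ⟨t', hteq⟩
        exact hsfx.sublist.trans hn'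

theorem sublist_cons_cases {s t : List A} {b : A} (h : s <+ b :: t) :
    s <+ t ∨ ∃ s', s = b :: s' ∧ s' <+ t := by
  cases h with
  | cons _ h => exact Or.inl h
  | cons_cons _ h => exact Or.inr ⟨_, rfl, h⟩

theorem cons_sublist_of_ne {s t : List A} {a b : A} (hab : a ≠ b) (h : a :: s <+ b :: t) :
    a :: s <+ t := by
  cases h with
  | cons _ h => exact h
  | cons_cons _ h => exact absurd rfl hab

theorem sublist_concat_cases {s x : List A} {c : A} (h : s <+ x ++ [c]) :
    s <+ x ∨ ∃ P, s = P ++ [c] ∧ P <+ x := by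
  rw [List.sublist_append_iff] at h
  obtain ⟨p, q, rfl, hp, hq⟩ := h
  rcases List.sublist_singleton.mp hq with rfl | rfl
  · left; simpa using hp
  · right; exact ⟨p, rfl, hp⟩

theorem blocked_last {s u'' : List A} {d e : A} (hns : ¬ s <+ u'') (h : s ++ [e] <+ u'' ++ [d]) :
    False := by
  rcases sublist_concat_cases h with h' | ⟨Z, hZ, hZ'⟩
  · exact hns ((List.sublist_append_left s [e]).trans h')
  · obtain ⟨rfl, -⟩ := List.append_inj' hZ rfl
    exact hns hZ'

theorem height_nonempty (u : List A) : ∀ v : List A, SimonCong (u.length + 1) u v → v = u := by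
  intro w h
  have hu : u <+ w := (h u (by omega)).mp (List.Sublist.refl u)
  by_contra hne
  have hlt : u.length < w.length := by
    rcases Nat.lt_or_ge u.length w.length with h' | h'
    · exact h'
    · exact absurd (hu.eq_of_length_le h').symm hne
  have hlen : (w.take (u.length + 1)).length = u.length + 1 := by
    rw [List.length_take]
    omega
  have htake : w.take (u.length + 1) <+ u :=
    (h _ (by rw [hlen])).mpr (List.take_prefix _ w).sublist
  have := htake.length_le
  omega

theorem height_spec (u : List A) : ∀ w : List A, SimonCong (pcHeight u) u w → w = u :=
  Nat.sInf_mem (⟨u.length + 1, height_nonempty u⟩ : Set.Nonempty {n : ℕ | ∀ v : List A, SimonCong n u v → v = u})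

theorem rho_spec (u : List A) : Reduced (pcRho u) u := by
  have hne : Reduced u.length u := by
    intro u' hsub hneu hSC
    have h1 : u <+ u' := (hSC u le_rfl).mp (List.Sublist.refl u)
    exact hneu (hsub.eq_of_length_le h1.length_le)
  exact Nat.sInf_mem (⟨u.length, hne⟩ : Set.Nonempty {m : ℕ | Reduced m u})

theorem rho_le_height (u : List A) : pcRho u ≤ pcHeight u := by
  apply Nat.sInf_le
  intro u' hsub hneu hSC
  exact hneu (height_spec u u' hSC)

theorem comp_ins {k₁ k₂ : ℕ} {x y : List A} {c : A}
    (h1 : SimonCong k₁ x (x ++ [c])) (h2 : SimonCong k₂ y (c :: y)) :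
    SimonCong (k₁ + k₂) (x ++ y) (x ++ c :: y) := by
  intro s hs
  constructor
  · intro h
    exact h.trans (List.Sublist.append_left (List.sublist_cons_self c y) x)
  · intro h
    rw [List.sublist_append_iff] at h
    obtain ⟨m, nn, rfl, hm, hn⟩ := h
    rcases sublist_cons_cases hn with hn' | ⟨Q, rfl, hQ⟩
    · exact List.Sublist.append hm hn'
    · have hlen : m.length + 1 + Q.length ≤ k₁ + k₂ := by
        simp at hs
        omega
      rcases Nat.lt_or_ge m.length k₁ with hc | hc
      · have hmc : m ++ [c] <+ x :=
          (h1 (m ++ [c]) (by simp; omega)).mpr (List.Sublist.append hm (List.Sublist.refl [c]))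
        have := List.Sublist.append hmc hQ
        simpa using this
      · have hq : Q.length + 1 ≤ k₂ := by omega
        have hcq : c :: Q <+ y :=
          (h2 (c :: Q) (by simp; omega)).mpr (List.cons_sublist_cons.mpr hQ)
        exact List.Sublist.append hm hcq

theorem exists_KP (X : List A) (c : A) :
    ∃ (K : ℕ) (P : List A), 1 ≤ K ∧ SimonCong (K - 1) X (X ++ [c]) ∧
      P <+ X ∧ ¬ (P ++ [c]) <+ X ∧ P.length + 1 ≤ K := by
  have hne : ¬ SimonCong (X.length + 1) X (X ++ [c]) := by
    intro hSC
    have h1 : X ++ [c] <+ X := (hSC (X ++ [c]) (by simp)).mpr (List.Sublist.refl _)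
    have := h1.length_le
    simp at this
  set K := sInf {k : ℕ | ¬ SimonCong k X (X ++ [c])} with hK
  have hmem : ¬ SimonCong K X (X ++ [c]) :=
    Nat.sInf_mem (⟨X.length + 1, hne⟩ : Set.Nonempty {k : ℕ | ¬ SimonCong k X (X ++ [c])})
  have hK1 : 1 ≤ K := by
    rcases Nat.eq_zero_or_pos K with h0 | h
    · exact absurd (simonCong_zero _ _) (h0 ▸ hmem)
    · exact h
  have hbelow : SimonCong (K - 1) X (X ++ [c]) := by
    by_contra hc
    have := Nat.sInf_le (show K - 1 ∈ {k : ℕ | ¬ SimonCong k X (X ++ [c])} from hc)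
    omega
  obtain ⟨s, hlen, hsub, hnsub⟩ := wit_of_not (List.sublist_append_left X [c]) hmem
  rcases sublist_concat_cases hsub with h | ⟨P, rfl, hP⟩
  · exact absurd h hnsub
  · exact ⟨K, P, hK1, hbelow, hP, hnsub, by simpa using hlen⟩

theorem exists_KQ (Y : List A) (c : A) :
    ∃ (K : ℕ) (Q : List A), 1 ≤ K ∧ SimonCong (K - 1) Y (c :: Y) ∧
      Q <+ Y ∧ ¬ (c :: Q) <+ Y ∧ Q.length + 1 ≤ K := by
  have hne : ¬ SimonCong (Y.length + 1) Y (c :: Y) := by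
    intro hSC
    have h1 : c :: Y <+ Y := (hSC (c :: Y) (by simp)).mpr (List.Sublist.refl _)
    have := h1.length_le
    simp at this
  set K := sInf {k : ℕ | ¬ SimonCong k Y (c :: Y)} with hK
  have hmem : ¬ SimonCong K Y (c :: Y) :=
    Nat.sInf_mem (⟨Y.length + 1, hne⟩ : Set.Nonempty {k : ℕ | ¬ SimonCong k Y (c :: Y)})
  have hK1 : 1 ≤ K := by
    rcases Nat.eq_zero_or_pos K with h0 | h
    · exact absurd (simonCong_zero _ _) (h0 ▸ hmem)
    · exact h
  have hbelow : SimonCong (K - 1) Y (c :: Y) := by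
    by_contra hc
    have := Nat.sInf_le (show K - 1 ∈ {k : ℕ | ¬ SimonCong k Y (c :: Y)} from hc)
    omega
  obtain ⟨s, hlen, hsub, hnsub⟩ := wit_of_not (List.sublist_cons_self c Y) hmem
  rcases sublist_cons_cases hsub with h | ⟨Q, rfl, hQ⟩
  · exact absurd h hnsub
  · exact ⟨K, Q, hK1, hbelow, hQ, hnsub, by simpa using hlen⟩

theorem ext_right {Q u₂ : List A} {c : A} (hQ : Q <+ u₂) (hnQ : ¬ (c :: Q) <+ u₂) (v : List A) :
    ∃ Q', Q' <+ u₂ ++ v ∧ ¬ (c :: Q') <+ (u₂ ++ v) ∧ Q'.length ≤ Q.length + pcRho v := by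
  cases v with
  | nil =>
    refine ⟨Q, by simpa using hQ, by simpa using hnQ, by omega⟩
  | cons b v' =>
    have hv' : ¬ SimonCong (pcRho (b :: v')) v' (b :: v') := by
      intro h
      exact rho_spec (b :: v') v' (List.sublist_cons_self b v')
        (by intro hc; have := congrArg List.length hc; simp at this) (simonCong_symm h)
    obtain ⟨s, hslen, hssub, hsnsub⟩ := wit_of_not (List.sublist_cons_self b v') hv'
    refine ⟨Q ++ s, List.Sublist.append hQ hssub, ?_, by simp; omega⟩
    intro hcon
    have hcon' : (c :: Q) ++ s <+ u₂ ++ b :: v' := by simpa using hcon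
    rcases lemext hcon' with h | h
    · exact hnQ h
    · exact hsnsub h

theorem ext_left {P v₁ : List A} {c : A} (hP : P <+ v₁) (hnP : ¬ (P ++ [c]) <+ v₁) (u : List A) :
    ∃ P', P' <+ u ++ v₁ ∧ ¬ (P' ++ [c]) <+ (u ++ v₁) ∧ P'.length ≤ pcRho u + P.length := by
  rcases u.eq_nil_or_concat' with rfl | ⟨u'', d, rfl⟩
  · exact ⟨P, by simpa using hP, by simpa using hnP, by omega⟩
  · have hnu : ¬ SimonCong (pcRho (u'' ++ [d])) u'' (u'' ++ [d]) := by
      intro h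
      exact rho_spec (u'' ++ [d]) u'' (List.sublist_append_left u'' [d])
        (by intro hc; have := congrArg List.length hc; simp at this) (simonCong_symm h)
    obtain ⟨s, hslen, hssub, hsnsub⟩ := wit_of_not (List.sublist_append_left u'' [d]) hnu
    refine ⟨s ++ P, List.Sublist.append hssub hP, ?_, by simp; omega⟩
    intro hcon
    cases P with
    | nil =>
      have hcon' : s ++ c :: ([] : List A) <+ (u'' ++ [d]) ++ v₁ := by simpa using hcon
      rcases dicho hcon' with h | h
      · exact blocked_last hsnsub h
      · exact hnP (by simpa using h)
    | cons e P₀ =>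
      have hcon' : s ++ e :: (P₀ ++ [c]) <+ (u'' ++ [d]) ++ v₁ := by simpa using hcon
      rcases dicho hcon' with h | h
      · exact blocked_last hsnsub h
      · exact hnP h

theorem glue_neg {P Q X Y : List A} {c : A} (hnP : ¬ (P ++ [c]) <+ X) (hnQ : ¬ (c :: Q) <+ Y)
    (h : P ++ c :: Q <+ X ++ Y) : False := by
  rcases dicho h with h' | h'
  exacts [hnP h', hnQ h']


theorem sl_core {n : ℕ} {q u v m₁ r₁ r₂ : List A} {a b : A} (hba : b ≠ a)
    (H : SimonCong n (q ++ a :: u) (q ++ b :: v))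
    (hm₁ : m₁ <+ q) (hF1 : ¬ (m₁ ++ [b]) <+ q)
    (hlen1 : m₁.length + 1 + r₁.length ≤ n)
    (hr₂ : r₂ <+ b :: v) (hF2 : ¬ r₂ <+ u) (hlen2 : r₂.length ≤ r₁.length) : False := by
  rcases sublist_cons_cases hr₂ with h | ⟨r₂', rfl, h⟩
  · have hpos : m₁ ++ b :: r₂ <+ q ++ b :: v :=
      List.Sublist.append hm₁ (List.cons_sublist_cons.mpr h)
    have hlen : (m₁ ++ b :: r₂).length ≤ n := by simp; omega
    have hU : m₁ ++ b :: r₂ <+ q ++ a :: u := (H _ hlen).mpr hpos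
    rcases dicho hU with h' | h'
    · exact hF1 h'
    · have := cons_sublist_of_ne hba h'
      exact hF2 ((List.sublist_cons_self b r₂).trans this)
  · have hpos : m₁ ++ b :: r₂' <+ q ++ b :: v :=
      List.Sublist.append hm₁ (List.cons_sublist_cons.mpr h)
    have hlen : (m₁ ++ b :: r₂').length ≤ n := by
      simp at hlen2 ⊢
      omega
    have hU : m₁ ++ b :: r₂' <+ q ++ a :: u := (H _ hlen).mpr hpos
    rcases dicho hU with h' | h'
    · exact hF1 h'
    · exact hF2 (cons_sublist_of_ne hba h')

theorem sl {n : ℕ} (q u v : List A) (a b : A) (hab : a ≠ b)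
    (H : SimonCong n (q ++ a :: u) (q ++ b :: v)) :
    SimonCong n (q ++ a :: u) (q ++ b :: a :: u) ∨
    SimonCong n (q ++ b :: v) (q ++ a :: b :: v) := by
  by_cases hc1 : SimonCong n (q ++ a :: u) (q ++ b :: a :: u)
  · exact Or.inl hc1
  by_cases hc2 : SimonCong n (q ++ b :: v) (q ++ a :: b :: v)
  · exact Or.inr hc2
  exfalso
  have hsub1 : q ++ a :: u <+ q ++ b :: a :: u :=
    List.Sublist.append_left (List.sublist_cons_self b _) q
  obtain ⟨s, hslen, hssub, hsnsub⟩ := wit_of_not hsub1 hc1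
  rw [List.sublist_append_iff] at hssub
  obtain ⟨m₁, n₁, rfl, hm₁, hn₁⟩ := hssub
  rcases sublist_cons_cases hn₁ with h | ⟨r₁, rfl, hr₁⟩
  · exact hsnsub (List.Sublist.append hm₁ h)
  have hF1 : ¬ (m₁ ++ [b]) <+ q := by
    intro h
    exact hsnsub (by simpa [List.append_assoc] using List.Sublist.append h hr₁)
  have hF2 : ¬ r₁ <+ v := by
    intro h
    have hpos : m₁ ++ b :: r₁ <+ q ++ b :: v :=
      List.Sublist.append hm₁ (List.cons_sublist_cons.mpr h)
    exact hsnsub ((H _ hslen).mpr hpos)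
  have hsub2 : q ++ b :: v <+ q ++ a :: b :: v :=
    List.Sublist.append_left (List.sublist_cons_self a _) q
  obtain ⟨t, htlen, htsub, htnsub⟩ := wit_of_not hsub2 hc2
  rw [List.sublist_append_iff] at htsub
  obtain ⟨m₂, n₂, rfl, hm₂, hn₂⟩ := htsub
  rcases sublist_cons_cases hn₂ with h | ⟨r₂, rfl, hr₂⟩
  · exact htnsub (List.Sublist.append hm₂ h)
  have hF1' : ¬ (m₂ ++ [a]) <+ q := by
    intro h
    exact htnsub (by simpa [List.append_assoc] using List.Sublist.append h hr₂)
  have hF2' : ¬ r₂ <+ u := by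
    intro h
    have hpos : m₂ ++ a :: r₂ <+ q ++ a :: u :=
      List.Sublist.append hm₂ (List.cons_sublist_cons.mpr h)
    exact htnsub ((H _ htlen).mp hpos)
  have hslen' : m₁.length + 1 + r₁.length ≤ n := by
    simp at hslen; omega
  have htlen' : m₂.length + 1 + r₂.length ≤ n := by
    simp at htlen; omega
  rcases le_total r₂.length r₁.length with hle | hle
  · exact sl_core (Ne.symm hab) H hm₁ hF1 hslen' hr₂ hF2' hle
  · exact sl_core hab (simonCong_symm H) hm₂ hF1' htlen' hr₁ hF2 hle

theorem join_aux {n : ℕ} : ∀ (m : ℕ) (u v q : List A), u.length + v.length ≤ m →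
    SimonCong n (q ++ u) (q ++ v) → ∃ z, u <+ z ∧ v <+ z ∧ SimonCong n (q ++ u) (q ++ z) := by
  intro m
  induction m with
  | zero =>
    intro u v q hm H
    have hu : u = [] := by
      cases u with
      | nil => rfl
      | cons a u' => simp at hm
    have hv : v = [] := by
      cases v with
      | nil => rfl
      | cons a v' => simp at hm
    subst hu; subst hv
    exact ⟨[], List.Sublist.refl _, List.Sublist.refl _, H⟩
  | succ m ih =>
    intro u v q hm H
    cases u with
    | nil => exact ⟨v, List.nil_sublist v, List.Sublist.refl v, H⟩
    | cons a u' =>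
      cases v with
      | nil => exact ⟨a :: u', List.Sublist.refl _, List.nil_sublist _, fun s _ => Iff.rfl⟩
      | cons b v' =>
        by_cases hab : a = b
        · subst hab
          have H' : SimonCong n ((q ++ [a]) ++ u') ((q ++ [a]) ++ v') := by
            simpa [List.append_assoc] using H
          obtain ⟨z', h1, h2, h3⟩ := ih u' v' (q ++ [a]) (by simp at hm ⊢; omega) H'
          exact ⟨a :: z', List.cons_sublist_cons.mpr h1, List.cons_sublist_cons.mpr h2,
            by simpa [List.append_assoc] using h3⟩
        · rcases sl q u' v' a b hab H with hc | hc
          · have H' : SimonCong n ((q ++ [b]) ++ a :: u') ((q ++ [b]) ++ v') := by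
              have := simonCong_trans (simonCong_symm hc) H
              simpa [List.append_assoc] using this
            obtain ⟨z', h1, h2, h3⟩ := ih (a :: u') v' (q ++ [b]) (by simp at hm ⊢; omega) H'
            refine ⟨b :: z', h1.trans (List.sublist_cons_self b z'),
              List.cons_sublist_cons.mpr h2, ?_⟩
            have h3' : SimonCong n (q ++ b :: a :: u') (q ++ b :: z') := by
              simpa [List.append_assoc] using h3
            exact simonCong_trans hc h3'
          · have H' : SimonCong n ((q ++ [a]) ++ u') ((q ++ [a]) ++ b :: v') := by
              have := simonCong_trans H hc
              simpa [List.append_assoc] using this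
            obtain ⟨z', h1, h2, h3⟩ := ih u' (b :: v') (q ++ [a]) (by simp at hm ⊢; omega) H'
            refine ⟨a :: z', List.cons_sublist_cons.mpr h1,
              h2.trans (List.sublist_cons_self a z'), ?_⟩
            simpa [List.append_assoc] using h3

theorem del_between : ∀ {w x : List A}, w <+ x → w ≠ x →
    ∃ x₁ c x₂, x = x₁ ++ c :: x₂ ∧ w <+ x₁ ++ x₂ := by
  intro w x h
  induction h with
  | slnil => intro h; exact absurd rfl h
  | @cons l₁ l₂ a h ih => intro _; exact ⟨[], a, l₂, rfl, h⟩
  | @cons_cons l₁ l₂ a h ih =>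
    intro hne
    have hne' : l₁ ≠ l₂ := by rintro rfl; exact hne rfl
    obtain ⟨x₁, c, x₂, rfl, hsub⟩ := ih hne'
    exact ⟨a :: x₁, c, x₂, rfl, List.cons_sublist_cons.mpr hsub⟩

theorem ins_between : ∀ {x z : List A}, x <+ z → x ≠ z →
    ∃ x₁ c x₂, x = x₁ ++ x₂ ∧ (x₁ ++ c :: x₂) <+ z := by
  intro x z h
  induction h with
  | slnil => intro h; exact absurd rfl h
  | @cons l₁ l₂ a h ih =>
    intro _
    by_cases he : l₁ = l₂
    · subst he; exact ⟨[], a, l₁, rfl, List.Sublist.refl _⟩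
    · obtain ⟨x₁, c, x₂, h1, h2⟩ := ih he
      exact ⟨x₁, c, x₂, h1, h2.cons a⟩
  | @cons_cons l₁ l₂ a h ih =>
    intro hne
    have hne' : l₁ ≠ l₂ := by rintro rfl; exact hne rfl
    obtain ⟨x₁, c, x₂, h1, h2⟩ := ih hne'
    exact ⟨a :: x₁, c, x₂, by rw [h1]; rfl, List.cons_sublist_cons.mpr h2⟩


theorem ins_u (X u₂ v : List A) (c : A) :
    ¬ SimonCong (max (pcHeight (X ++ u₂) + pcRho v) (pcRho (X ++ u₂) + pcHeight v))
      ((X ++ u₂) ++ v) (X ++ c :: (u₂ ++ v)) := by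
  intro hSC
  obtain ⟨K₁, P, hK₁, hSC₁, hP, hnP, hPl⟩ := exists_KP X c
  obtain ⟨K₂, Q, hK₂, hSC₂, hQ, hnQ, hQl⟩ := exists_KQ u₂ c
  have hcomp := comp_ins hSC₁ hSC₂
  have hne : X ++ c :: u₂ ≠ X ++ u₂ := by
    intro h
    have := congrArg List.length h
    simp at this
  have hbound : (K₁ - 1) + (K₂ - 1) < pcHeight (X ++ u₂) := by
    by_contra hge
    push_neg at hge
    exact hne (height_spec (X ++ u₂) _ (simonCong_mono hcomp hge))
  obtain ⟨Q', hQ', hnQ', hQ'l⟩ := ext_right hQ hnQ v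
  have hposS : P ++ c :: Q' <+ X ++ c :: (u₂ ++ v) :=
    List.Sublist.append hP (List.cons_sublist_cons.mpr hQ')
  have hmax : pcHeight (X ++ u₂) + pcRho v ≤
      max (pcHeight (X ++ u₂) + pcRho v) (pcRho (X ++ u₂) + pcHeight v) := le_max_left _ _
  have hlenS : (P ++ c :: Q').length ≤
      max (pcHeight (X ++ u₂) + pcRho v) (pcRho (X ++ u₂) + pcHeight v) := by
    simp
    omega
  have hSuv : P ++ c :: Q' <+ (X ++ u₂) ++ v := (hSC _ hlenS).mpr hposS
  rw [List.append_assoc] at hSuv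
  exact glue_neg hnP hnQ' hSuv

theorem del_u (X u₂ v : List A) (c : A) :
    ¬ SimonCong (max (pcHeight (X ++ c :: u₂) + pcRho v) (pcRho (X ++ c :: u₂) + pcHeight v))
      ((X ++ c :: u₂) ++ v) (X ++ (u₂ ++ v)) := by
  intro hSC
  obtain ⟨K₁, P, hK₁, hSC₁, hP, hnP, hPl⟩ := exists_KP X c
  obtain ⟨K₂, Q, hK₂, hSC₂, hQ, hnQ, hQl⟩ := exists_KQ u₂ c
  have hcomp := simonCong_symm (comp_ins hSC₁ hSC₂)
  have hne : X ++ u₂ ≠ X ++ c :: u₂ := by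
    intro h
    have := congrArg List.length h
    simp at this
  have hsub : X ++ u₂ <+ X ++ c :: u₂ :=
    List.Sublist.append_left (List.sublist_cons_self c u₂) X
  have hbound : (K₁ - 1) + (K₂ - 1) < pcRho (X ++ c :: u₂) := by
    by_contra hge
    push_neg at hge
    exact rho_spec (X ++ c :: u₂) (X ++ u₂) hsub hne (simonCong_mono hcomp hge)
  obtain ⟨Q', hQ', hnQ', hQ'l⟩ := ext_right hQ hnQ v
  have hposS : P ++ c :: Q' <+ (X ++ c :: u₂) ++ v := by
    rw [List.append_assoc]
    exact List.Sublist.append hP (List.cons_sublist_cons.mpr hQ')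
  have hmax : pcRho (X ++ c :: u₂) + pcHeight v ≤
      max (pcHeight (X ++ c :: u₂) + pcRho v) (pcRho (X ++ c :: u₂) + pcHeight v) := le_max_right _ _
  have hrr := rho_le_height v
  have hlenS : (P ++ c :: Q').length ≤
      max (pcHeight (X ++ c :: u₂) + pcRho v) (pcRho (X ++ c :: u₂) + pcHeight v) := by
    simp
    omega
  exact glue_neg hnP hnQ' ((hSC _ hlenS).mp hposS)

theorem ins_v (u v₁ Y : List A) (c : A) :
    ¬ SimonCong (max (pcHeight u + pcRho (v₁ ++ Y)) (pcRho u + pcHeight (v₁ ++ Y)))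
      (u ++ (v₁ ++ Y)) ((u ++ v₁) ++ c :: Y) := by
  intro hSC
  obtain ⟨K₁, P, hK₁, hSC₁, hP, hnP, hPl⟩ := exists_KP v₁ c
  obtain ⟨K₂, Q, hK₂, hSC₂, hQ, hnQ, hQl⟩ := exists_KQ Y c
  have hcomp := comp_ins hSC₁ hSC₂
  have hne : v₁ ++ c :: Y ≠ v₁ ++ Y := by
    intro h
    have := congrArg List.length h
    simp at this
  have hbound : (K₁ - 1) + (K₂ - 1) < pcHeight (v₁ ++ Y) := by
    by_contra hge
    push_neg at hge
    exact hne (height_spec (v₁ ++ Y) _ (simonCong_mono hcomp hge))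
  obtain ⟨P', hP', hnP', hP'l⟩ := ext_left hP hnP u
  have hposS : P' ++ c :: Q <+ (u ++ v₁) ++ c :: Y :=
    List.Sublist.append hP' (List.cons_sublist_cons.mpr hQ)
  have hmax : pcRho u + pcHeight (v₁ ++ Y) ≤
      max (pcHeight u + pcRho (v₁ ++ Y)) (pcRho u + pcHeight (v₁ ++ Y)) := le_max_right _ _
  have hlenS : (P' ++ c :: Q).length ≤
      max (pcHeight u + pcRho (v₁ ++ Y)) (pcRho u + pcHeight (v₁ ++ Y)) := by
    simp
    omega
  have hSuv : P' ++ c :: Q <+ u ++ (v₁ ++ Y) := (hSC _ hlenS).mpr hposS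
  rw [← List.append_assoc] at hSuv
  exact glue_neg hnP' hnQ hSuv

theorem del_v (u v₁ Y : List A) (c : A) :
    ¬ SimonCong (max (pcHeight u + pcRho (v₁ ++ c :: Y)) (pcRho u + pcHeight (v₁ ++ c :: Y)))
      (u ++ (v₁ ++ c :: Y)) ((u ++ v₁) ++ Y) := by
  intro hSC
  obtain ⟨K₁, P, hK₁, hSC₁, hP, hnP, hPl⟩ := exists_KP v₁ c
  obtain ⟨K₂, Q, hK₂, hSC₂, hQ, hnQ, hQl⟩ := exists_KQ Y c
  have hcomp := simonCong_symm (comp_ins hSC₁ hSC₂)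
  have hne : v₁ ++ Y ≠ v₁ ++ c :: Y := by
    intro h
    have := congrArg List.length h
    simp at this
  have hsub : v₁ ++ Y <+ v₁ ++ c :: Y :=
    List.Sublist.append_left (List.sublist_cons_self c Y) v₁
  have hbound : (K₁ - 1) + (K₂ - 1) < pcRho (v₁ ++ c :: Y) := by
    by_contra hge
    push_neg at hge
    exact rho_spec (v₁ ++ c :: Y) (v₁ ++ Y) hsub hne (simonCong_mono hcomp hge)
  obtain ⟨P', hP', hnP', hP'l⟩ := ext_left hP hnP u
  have hposS : P' ++ c :: Q <+ u ++ (v₁ ++ c :: Y) := by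
    rw [← List.append_assoc]
    exact List.Sublist.append hP' (List.cons_sublist_cons.mpr hQ)
  have hmax : pcRho u + pcHeight (v₁ ++ c :: Y) ≤
      max (pcHeight u + pcRho (v₁ ++ c :: Y)) (pcRho u + pcHeight (v₁ ++ c :: Y)) := le_max_right _ _
  have hrr := rho_le_height (v₁ ++ c :: Y)
  have hlenS : (P' ++ c :: Q).length ≤
      max (pcHeight u + pcRho (v₁ ++ c :: Y)) (pcRho u + pcHeight (v₁ ++ c :: Y)) := by
    simp
    omega
  exact glue_neg hnP' hnQ ((hSC _ hlenS).mp hposS)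

theorem refute_ins (u v X Y : List A) (c : A) (hXY : u ++ v = X ++ Y) :
    ¬ SimonCong (max (pcHeight u + pcRho v) (pcRho u + pcHeight v)) (u ++ v) (X ++ c :: Y) := by
  rcases List.append_eq_append_iff.mp hXY with ⟨t, hX, hv⟩ | ⟨t, hu, hY⟩
  · subst hv; subst hX
    exact ins_v u t Y c
  · subst hu; subst hY
    exact ins_u X t v c

theorem refute_del (u v X Y : List A) (c : A) (hXY : u ++ v = X ++ c :: Y) :
    ¬ SimonCong (max (pcHeight u + pcRho v) (pcRho u + pcHeight v)) (u ++ v) (X ++ Y) := by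
  rcases List.append_eq_append_iff.mp hXY with ⟨t, hX, hv⟩ | ⟨t, hu, h2⟩
  · subst hv; subst hX
    exact del_v u t Y c
  · cases t with
    | nil =>
      simp at hu h2
      subst hu
      subst h2
      have := del_v u [] Y c
      simpa using this
    | cons e t' =>
      rw [List.cons_append] at h2
      injection h2 with h2a h2b
      subst h2a
      subst h2b
      subst hu
      exact del_u X t' v c


end Stmt5Aux

/-- convexity of `h` w.r.t. concatenation. -/
theorem stmt5 {A : Type*} [Fintype A] (u v : List A) :
    pcHeight (u ++ v) ≤ max (pcHeight u + pcRho v) (pcRho u + pcHeight v) := by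
  refine Nat.sInf_le (fun w hw => ?_)
  by_contra hne
  obtain ⟨z, hz1, hz2, hz3⟩ :=
    Stmt5Aux.join_aux ((u ++ v).length + w.length) (u ++ v) w [] le_rfl hw
  by_cases hzeq : z = u ++ v
  · rw [hzeq] at hz2
    obtain ⟨x₁, c, x₂, hxeq, hsub⟩ := Stmt5Aux.del_between hz2 hne
    have hSC : SimonCong (max (pcHeight u + pcRho v) (pcRho u + pcHeight v))
        (u ++ v) (x₁ ++ x₂) := fun s hs =>
      ⟨fun h => ((hw s hs).mp h).trans hsub,
       fun h => h.trans (by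
        rw [hxeq]
        exact List.Sublist.append_left (List.sublist_cons_self c x₂) x₁)⟩
    exact Stmt5Aux.refute_del u v x₁ x₂ c hxeq hSC
  · obtain ⟨x₁, c, x₂, hxeq, hsub⟩ := Stmt5Aux.ins_between hz1 (fun h => hzeq h.symm)
    have hSC : SimonCong (max (pcHeight u + pcRho v) (pcRho u + pcHeight v))
        (u ++ v) (x₁ ++ c :: x₂) := fun s hs =>
      ⟨fun h => (hxeq ▸ h).trans
          (List.Sublist.append_left (List.sublist_cons_self c x₂) x₁),
       fun h => (hz3 s hs).mpr (h.trans hsub)⟩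
    exact Stmt5Aux.refute_ins u v x₁ x₂ c hxeq hSC
end

section
/- For all words u, v over a finite alphabet, h(u) ≤ h(u·v) and h(v) ≤ h(u·v). -/
variable {A : Type*}

lemma simonCong_append_right {n : ℕ} {u w : List A} (h : SimonCong n u w) (v : List A) :
    SimonCong n (u ++ v) (w ++ v) := by
  intro s hs
  simp only [List.sublist_append_iff]
  constructor <;> rintro ⟨s1, s2, rfl, h1, h2⟩ <;> refine ⟨s1, s2, rfl, ?_, h2⟩
  · exact (h s1 (le_trans (by simp) hs)).mp h1
  · exact (h s1 (le_trans (by simp) hs)).mpr h1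

lemma simonCong_append_left {n : ℕ} {v w : List A} (h : SimonCong n v w) (u : List A) :
    SimonCong n (u ++ v) (u ++ w) := by
  intro s hs
  simp only [List.sublist_append_iff]
  constructor <;> rintro ⟨s1, s2, rfl, h1, h2⟩ <;> refine ⟨s1, s2, rfl, h1, ?_⟩
  · exact (h s2 (le_trans (by simp) hs)).mp h2
  · exact (h s2 (le_trans (by simp) hs)).mpr h2

lemma pcHeight_set_nonempty (u : List A) :
    ({n : ℕ | ∀ v : List A, SimonCong n u v → v = u}).Nonempty := by
  refine ⟨u.length + 1, fun w hw => ?_⟩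
  have hu : u.Sublist w := (hw u (by omega)).mp (List.Sublist.refl u)
  by_cases hl : w.length ≤ u.length + 1
  · have hws : w.Sublist u := (hw w hl).mpr (List.Sublist.refl w)
    exact hws.antisymm hu
  · exfalso
    have hsw : (w.take (u.length + 1)).Sublist w := List.take_sublist _ _
    have : (w.take (u.length + 1)).Sublist u := (hw _ (by simp)).mpr hsw
    have := this.length_le
    simp at this
    omega

/-- monotonicity of `h` w.r.t. concatenation. -/
theorem stmt6 {A : Type*} [Fintype A] (u v : List A) :
    pcHeight u ≤ pcHeight (u ++ v) ∧ pcHeight v ≤ pcHeight (u ++ v) := by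
  have hmem := Nat.sInf_mem (pcHeight_set_nonempty (u ++ v))
  set n := pcHeight (u ++ v) with hn
  constructor
  · apply Nat.sInf_le
    intro w hw
    have := hmem (w ++ v) (simonCong_append_right hw v)
    exact List.append_cancel_right this
  · apply Nat.sInf_le
    intro w hw
    have := hmem (u ++ w) (simonCong_append_left hw u)
    exact List.append_cancel_left this
end

section
/- For any word u over a finite alphabet and any letters a, b, r(u·a, b) ≤ 1 + r(u, a). -/
variable {A : Type*}

lemma key_lemma {A : Type*} (u : List A) (a b : A) (m : ℕ)
    (h : SimonCong (m + 1) (u ++ [a]) ((u ++ [a]) ++ [b])) :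
    SimonCong m u (u ++ [a]) := by
  intro s hs
  constructor
  · exact fun h' => h'.trans (List.sublist_append_left u [a])
  · intro hsua
    by_contra hsu
    have hsb : (s ++ [b]).Sublist ((u ++ [a]) ++ [b]) := hsua.append (List.Sublist.refl [b])
    have hlen : (s ++ [b]).length ≤ m + 1 := by
      simp only [List.length_append, List.length_singleton]
      omega
    have hsb' : (s ++ [b]).Sublist (u ++ [a]) := (h _ hlen).mpr hsb
    rw [List.sublist_append_iff] at hsb'
    obtain ⟨l1, l2, heq, h1, h2⟩ := hsb'
    rcases List.sublist_singleton.mp h2 with rfl | rfl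
    · rw [List.append_nil] at heq
      subst heq
      exact hsu ((List.sublist_append_left s [b]).trans h1)
    · obtain ⟨rfl, _⟩ := List.append_inj' heq rfl
      exact hsu h1

/-- `r(u·a, b) ≤ 1 + r(u, a)`. -/
theorem stmt8 {A : Type*} [Fintype A] (u : List A) (a b : A) :
    rdist (u ++ [a]) [b] ≤ 1 + rdist u [a] := by
  unfold rdist sdelta
  apply sSup_le
  rintro d ⟨k, rfl, hcong⟩
  cases k with
  | zero => exact le_trans (by norm_num) le_self_add
  | succ m =>
    have hm : SimonCong m u (u ++ [a]) := key_lemma u a b m hcong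
    have : (m : ℕ∞) ≤ sSup {d : ℕ∞ | ∃ k : ℕ, d = ↑k ∧ SimonCong k u (u ++ [a])} :=
      le_sSup ⟨m, rfl, hm⟩
    calc ((m + 1 : ℕ) : ℕ∞) = 1 + (m : ℕ∞) := by push_cast; ring
    _ ≤ 1 + _ := by exact add_le_add_right this 1
end

section
/- For any words u, t over a finite alphabet and any letter a: (i) if t is nonempty then r(u, t) = min{ r(u, b) : b ∈ alph(t) }; (ii) if a does not occur in u then r(u, a) = 0; (iii) if u = u'·a·u'' with a not occurring in u'', then r(u, a) = 1 + r(u', a·u''). -/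
variable {A : Type*}

/-! ### Auxiliary lemmas -/

lemma sublist_concat_cases {s w : List A} {b : A} (h : s.Sublist (w ++ [b])) :
    s.Sublist w ∨ ∃ s', s = s' ++ [b] ∧ s'.Sublist w := by
  have h' : s.reverse.Sublist (b :: w.reverse) := by simpa using h.reverse
  rcases List.sublist_cons_iff.mp h' with h1 | ⟨r, he, h2⟩
  · left; simpa using h1.reverse
  · right
    refine ⟨r.reverse, ?_, by simpa using h2.reverse⟩
    have h3 := congrArg List.reverse he
    simpa using h3

lemma simonCong_mono {k j : ℕ} {u v : List A} (h : SimonCong k u v) (hj : j ≤ k) :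
    SimonCong j u v := fun s hs => h s (hs.trans hj)

lemma simonCong_zero {u v : List A} : SimonCong 0 u v := by
  intro s hs
  have h0 : s = [] := List.eq_nil_of_length_eq_zero (Nat.le_zero.mp hs)
  subst h0
  simp

lemma le_sdelta_iff {u v : List A} (n : ℕ) :
    (n : ℕ∞) ≤ sdelta u v ↔ SimonCong n u v := by
  constructor
  · intro h
    by_contra hc
    rcases n with _ | m
    · exact hc simonCong_zero
    · have hb : sdelta u v ≤ (m : ℕ∞) := by
        apply sSup_le
        rintro d ⟨k, rfl, hk⟩
        have hkm : k ≤ m := by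
          by_contra hk'
          push_neg at hk'
          exact hc (simonCong_mono hk (by omega))
        exact_mod_cast hkm
      have hmm : ((m + 1 : ℕ) : ℕ∞) ≤ (m : ℕ∞) := h.trans hb
      have hfin : m + 1 ≤ m := by exact_mod_cast hmm
      omega
  · intro h
    exact le_sSup ⟨n, rfl, h⟩

lemma enat_le_of_forall {x y : ℕ∞} (h : ∀ n : ℕ, (n : ℕ∞) ≤ x → (n : ℕ∞) ≤ y) :
    x ≤ y := by
  induction y using ENat.recTopCoe with
  | top => exact le_top
  | coe m =>
    induction x using ENat.recTopCoe with
    | top =>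
      have h1 := h (m + 1) le_top
      have h2 : m + 1 ≤ m := by exact_mod_cast h1
      omega
    | coe k => exact h k le_rfl

lemma enat_ext {x y : ℕ∞} (h : ∀ n : ℕ, ((n : ℕ∞) ≤ x ↔ (n : ℕ∞) ≤ y)) : x = y :=
  le_antisymm (enat_le_of_forall fun n hn => (h n).mp hn)
    (enat_le_of_forall fun n hn => (h n).mpr hn)

lemma simonCong_append_iff {n : ℕ} {u t : List A} :
    SimonCong n u (u ++ t) ↔
      ∀ s : List A, s.length ≤ n → s.Sublist (u ++ t) → s.Sublist u := by
  constructor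
  · intro h s hs hsub
    exact (h s hs).mpr hsub
  · intro h s hs
    exact ⟨fun hsub => hsub.trans (List.sublist_append_left u t), h s hs⟩

lemma key1 {n : ℕ} {u t : List A} :
    SimonCong n u (u ++ t) ↔ ∀ b ∈ t, SimonCong n u (u ++ [b]) := by
  constructor
  · intro h b hb
    rw [simonCong_append_iff] at h ⊢
    intro s hs hsub
    have hbt : (u ++ [b]).Sublist (u ++ t) :=
      (List.singleton_sublist.mpr hb).append_left u
    exact h s hs (hsub.trans hbt)
  · intro h
    induction t using List.reverseRecOn with
    | nil =>
      intro s _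
      simp
    | append_singleton t₂ b ih =>
      have ih' : SimonCong n u (u ++ t₂) := ih fun b' hb' => h b' (by simp [hb'])
      rw [simonCong_append_iff]
      intro s hs hsub
      rw [← List.append_assoc] at hsub
      rcases sublist_concat_cases hsub with h1 | ⟨s', rfl, h2⟩
      · exact (ih' s hs).mpr h1
      · have hs'len : s'.length ≤ n := le_trans (by simp) hs
        have hs' : s'.Sublist u := (ih' s' hs'len).mpr h2
        have hsub2 : (s' ++ [b]).Sublist (u ++ [b]) := hs'.append_right [b]
        exact (h b (by simp) _ hs).mpr hsub2

lemma not_mem_append_sublist {a : A} {s w v : List A} (hv : a ∉ v)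
    (h : (s ++ [a]).Sublist (w ++ v)) : (s ++ [a]).Sublist w := by
  induction v using List.reverseRecOn with
  | nil => simpa using h
  | append_singleton v₂ c ih =>
    rw [← List.append_assoc] at h
    rcases sublist_concat_cases h with h1 | ⟨s', he, _⟩
    · exact ih (fun hm => hv (by simp [hm])) h1
    · have hac : a = c := by
        have h1 := congrArg List.getLast? he
        simpa using h1
      exact absurd (by simp [hac] : a ∈ v₂ ++ [c]) hv

lemma concat_sublist_concat {a : A} {s w : List A}
    (h : (s ++ [a]).Sublist (w ++ [a])) : s.Sublist w := by
  rcases sublist_concat_cases h with h1 | ⟨s', he, h2⟩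
  · exact (List.sublist_append_left s [a]).trans h1
  · have hss : s = s' := List.append_cancel_right he
    rw [hss]
    exact h2

lemma key3 {n : ℕ} {a : A} {u' u'' : List A} (ha : a ∉ u'') :
    SimonCong (n + 1) (u' ++ [a] ++ u'') ((u' ++ [a] ++ u'') ++ [a]) ↔
      SimonCong n u' (u' ++ ([a] ++ u'')) := by
  rw [simonCong_append_iff, simonCong_append_iff]
  constructor
  · intro h s hs hsub
    have h1 : (s ++ [a]).Sublist ((u' ++ [a] ++ u'') ++ [a]) := by
      have hsub' : s.Sublist (u' ++ [a] ++ u'') := by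
        simpa [List.append_assoc] using hsub
      exact hsub'.append_right [a]
    have h2 : (s ++ [a]).Sublist (u' ++ [a] ++ u'') := h _ (by simp; omega) h1
    have h3 : (s ++ [a]).Sublist (u' ++ [a]) := not_mem_append_sublist ha h2
    exact concat_sublist_concat h3
  · intro h s hs hsub
    rcases sublist_concat_cases hsub with h1 | ⟨s', rfl, h2⟩
    · exact h1
    · have hs'len : s'.length ≤ n := by simp at hs; omega
      have hs' : s'.Sublist u' :=
        h s' hs'len (by simpa [List.append_assoc] using h2)
      exact (hs'.append_right [a]).trans (List.sublist_append_left (u' ++ [a]) u'')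

/-- recursive computation of `r`. -/
theorem stmt9 {A : Type*} [Fintype A] (u t : List A) (a : A) :
    (t ≠ [] → rdist u t = sInf {d : ℕ∞ | ∃ b ∈ t, d = rdist u [b]}) ∧
    (a ∉ u → rdist u [a] = 0) ∧
    (∀ u' u'' : List A, u = u' ++ [a] ++ u'' → a ∉ u'' →
      rdist u [a] = 1 + rdist u' ([a] ++ u'')) := by
  refine ⟨?_, ?_, ?_⟩
  · intro _
    apply enat_ext
    intro n
    show (n : ℕ∞) ≤ sdelta u (u ++ t) ↔ _
    rw [le_sdelta_iff, key1, le_sInf_iff]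
    constructor
    · rintro h d ⟨b, hb, rfl⟩
      exact (le_sdelta_iff n).mpr (h b hb)
    · intro h b hb
      exact (le_sdelta_iff n).mp (h _ ⟨b, hb, rfl⟩)
  · intro ha
    apply enat_ext
    intro n
    show (n : ℕ∞) ≤ sdelta u (u ++ [a]) ↔ _
    rw [le_sdelta_iff]
    constructor
    · intro h
      rcases n with _ | m
      · simp
      · exfalso
        have h2 : [a].Sublist u := (h [a] (by simp)).mpr (by simp)
        exact ha (List.singleton_sublist.mp h2)
    · intro h
      have hn : n = 0 := by
        have h0 : (n : ℕ∞) ≤ ((0 : ℕ) : ℕ∞) := by exact_mod_cast h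
        have h1 : n ≤ 0 := by exact_mod_cast h0
        omega
      subst hn
      exact simonCong_zero
  · intro u' u'' hu ha
    subst hu
    apply enat_ext
    intro n
    show (n : ℕ∞) ≤ sdelta (u' ++ [a] ++ u'') ((u' ++ [a] ++ u'') ++ [a]) ↔
      (n : ℕ∞) ≤ 1 + sdelta u' (u' ++ ([a] ++ u''))
    rcases n with _ | m
    · simp
    · rw [le_sdelta_iff, key3 ha, ← le_sdelta_iff]
      have hcast : ((m + 1 : ℕ) : ℕ∞) = 1 + (m : ℕ∞) := by push_cast; ring
      rw [hcast, ENat.add_le_add_iff_left (by simp : (1 : ℕ∞) ≠ ⊤)]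
end

section
/- For all words u, v over a finite alphabet and letters a, b, r(u·a·v, b) ≤ 1 + r(u·v, b) and ℓ(b, u·a·v) ≤ 1 + ℓ(b, u·v). -/
variable {A : Type*}

section Stmt11Aux

lemma aux_sublist_snoc_iff {l α : List A} {c : A} :
    l.Sublist (α ++ [c]) ↔ l.Sublist α ∨ ∃ l', l = l' ++ [c] ∧ l'.Sublist α := by
  constructor
  · intro h
    have h' : l.reverse.Sublist (c :: α.reverse) := by
      rw [← List.reverse_sublist] at h; simpa using h
    rcases List.sublist_cons_iff.1 h' with h2 | ⟨r, hr, hrs⟩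
    · left; rw [← List.reverse_sublist] at h2; simpa using h2
    · right; refine ⟨r.reverse, ?_, ?_⟩
      · have := congrArg List.reverse hr; simpa using this
      · rw [← List.reverse_sublist] at hrs; simpa using hrs
  · rintro (h | ⟨l', rfl, h⟩)
    · exact h.trans (List.sublist_append_left _ _)
    · exact h.append (List.Sublist.refl _)

lemma aux_split_max (s1 u v : List A) (h : s1.Sublist (u ++ v)) :
    ∃ p q : List A, s1 = p ++ q ∧ p.Sublist u ∧ q.Sublist v ∧
      ∀ (c : A) (q' : List A), q = c :: q' → ¬ (p ++ [c]).Sublist u := by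
  classical
  set S : Set ℕ := {n | n ≤ s1.length ∧ (s1.take n).Sublist u} with hS
  have hne : S.Nonempty := ⟨0, by simp [hS]⟩
  have hbdd : BddAbove S := ⟨s1.length, fun n hn => hn.1⟩
  set n := sSup S with hn
  have hmem : n ∈ S := Nat.sSup_mem hne hbdd
  have hmax : ∀ m, m ≤ s1.length → (s1.take m).Sublist u → m ≤ n :=
    fun m h1 h2 => le_csSup hbdd ⟨h1, h2⟩
  refine ⟨s1.take n, s1.drop n, (List.take_append_drop n s1).symm, hmem.2, ?_, ?_⟩
  · rcases List.sublist_append_iff.1 h with ⟨x, y, hxy, hx, hy⟩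
    have hxlen : x.length ≤ n := by
      apply hmax
      · rw [hxy]; simp
      · rw [hxy, List.take_left]; exact hx
    have hdd : s1.drop n = (s1.drop x.length).drop (n - x.length) := by
      rw [List.drop_drop]; congr 1; omega
    rw [hdd, hxy, List.drop_left]
    exact (List.drop_sublist _ _).trans hy
  · intro c q' hq' hsub
    have hplen : (s1.take n).length = n := by simp [hmem.1]
    have hs1 : s1 = s1.take n ++ (c :: q') := by
      rw [← hq']; exact (List.take_append_drop n s1).symm
    have htake : s1.take (n+1) = s1.take n ++ [c] := by
      conv_lhs => rw [hs1]
      rw [List.take_append]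
      have h1 : (s1.take n).take (n+1) = s1.take n := List.take_of_length_le (by omega)
      rw [h1, hplen]
      simp
    have hlen2 : n + 1 ≤ s1.length := by
      have := congrArg List.length hs1
      simp [hplen] at this
      omega
    have := hmax (n+1) hlen2 (htake ▸ hsub)
    omega

lemma aux_key_lemma (u v : List A) (a b : A) (k : ℕ)
    (H : SimonCong (k+1) (u ++ [a] ++ v) ((u ++ [a] ++ v) ++ [b])) :
    SimonCong k (u ++ v) ((u ++ v) ++ [b]) := by
  intro s hs
  constructor
  · exact fun h => h.trans (List.sublist_append_left _ _)
  intro hsub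
  rcases aux_sublist_snoc_iff.1 hsub with h | ⟨s1, rfl, hs1⟩
  · exact h
  obtain ⟨p, q, rfl, hpu, hqv, hmaxcon⟩ := aux_split_max s1 u v hs1
  have hlen1 : p.length + q.length + 1 ≤ k := by simp at hs; omega
  have htb : (p ++ [a] ++ q ++ [b]).Sublist ((u ++ [a] ++ v) ++ [b]) :=
    ((hpu.append (List.Sublist.refl [a])).append hqv).append (List.Sublist.refl [b])
  have htlen : (p ++ [a] ++ q ++ [b]).length ≤ k + 1 := by
    simp only [List.length_append, List.length_cons, List.length_nil]; omega
  have htb2 : (p ++ [a] ++ q ++ [b]).Sublist (u ++ [a] ++ v) := (H _ htlen).2 htb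
  have htb3 : (p ++ [a] ++ q ++ [b]).Sublist (u ++ (a :: v)) := by
    simpa [List.append_assoc] using htb2
  rcases List.sublist_append_iff.1 htb3 with ⟨x, y, hxy, hx, hy⟩
  have hxy' : (p ++ [a]) ++ (q ++ [b]) = x ++ y := by
    rw [← hxy]; simp [List.append_assoc]
  have goal_of_qbv : (q ++ [b]).Sublist v → ((p ++ q) ++ [b]).Sublist (u ++ v) := by
    intro h
    rw [List.append_assoc]
    exact hpu.append h
  have mid_case : x = p ++ [a] → y = q ++ [b] → ((p ++ q) ++ [b]).Sublist (u ++ v) := by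
    intro hx1 hy1
    have hxu : (p ++ [a]).Sublist u := hx1 ▸ hx
    have hyav : (q ++ [b]).Sublist (a :: v) := hy1 ▸ hy
    rcases List.sublist_cons_iff.1 hyav with h | ⟨r, hr, hrs⟩
    · exact goal_of_qbv h
    · cases q with
      | nil =>
        simp only [List.nil_append, List.append_nil] at hr ⊢
        obtain ⟨rfl, -⟩ : b = a ∧ ([] : List A) = r := by simpa using hr
        exact hxu.trans (List.sublist_append_left _ _)
      | cons c q' =>
        obtain ⟨rfl, -⟩ : c = a ∧ q' ++ [b] = r := by simpa using hr
        exact absurd hxu (hmaxcon c q' rfl)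
  rcases List.append_eq_append_iff.1 hxy' with ⟨m, hm1, hm2⟩ | ⟨m, hm1, hm2⟩
  · cases m with
    | nil =>
      exact mid_case (by simpa using hm1) (by simpa using hm2.symm)
    | cons c m' =>
      have hxu : ((p ++ [a]) ++ (c :: m')).Sublist u := hm1 ▸ hx
      cases q with
      | nil =>
        obtain ⟨rfl, hm', hy'⟩ : b = c ∧ m' = [] ∧ y = [] := by
          have h0 : [b] = c :: (m' ++ y) := by simpa using hm2
          simp at h0
          tauto
        simp only [List.append_nil]
        have hpb : (p ++ [b]).Sublist ((p ++ [a]) ++ (b :: m')) :=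
          (List.sublist_append_left p [a]).append
            (List.singleton_sublist.2 (by simp))
        exact (hpb.trans hxu).trans (List.sublist_append_left _ _)
      | cons d q' =>
        obtain ⟨rfl, -⟩ : d = c ∧ q' ++ [b] = m' ++ y := by simpa using hm2
        have hpd : (p ++ [d]).Sublist ((p ++ [a]) ++ (d :: m')) :=
          (List.sublist_append_left p [a]).append
            (List.singleton_sublist.2 (by simp))
        exact absurd (hpd.trans hxu) (hmaxcon d q' rfl)
  · rcases m.eq_nil_or_concat with rfl | ⟨m', c, rfl⟩
    · exact mid_case (by simpa using hm1.symm) (by simpa using hm2)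
    · rw [List.concat_eq_append] at hm1 hm2
      have hca : a = c := by
        have := congrArg List.reverse hm1
        simp [List.reverse_append] at this
        exact this.1
      subst hca
      have hsuf : (a :: (q ++ [b])).Sublist y := by
        rw [hm2]
        have he : (m' ++ [a]) ++ (q ++ [b]) = m' ++ (a :: (q ++ [b])) := by simp
        rw [he]
        exact List.sublist_append_right _ _
      exact goal_of_qbv (List.cons_sublist_cons.1 (hsuf.trans hy))

lemma aux_simonCong_reverse {k : ℕ} {u v : List A} (h : SimonCong k u v) :
    SimonCong k u.reverse v.reverse := by
  intro s hs
  have := h s.reverse (by simpa using hs)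
  constructor
  · intro hsub
    rw [← List.reverse_sublist] at hsub
    simp only [List.reverse_reverse] at hsub
    rw [← List.reverse_sublist]
    simpa using this.1 hsub
  · intro hsub
    rw [← List.reverse_sublist] at hsub
    simp only [List.reverse_reverse] at hsub
    rw [← List.reverse_sublist]
    simpa using this.2 hsub

lemma aux_sdelta_reverse (u v : List A) : sdelta u.reverse v.reverse = sdelta u v := by
  unfold sdelta
  congr 1
  ext d
  constructor
  · rintro ⟨k, rfl, hk⟩
    refine ⟨k, rfl, ?_⟩
    have := aux_simonCong_reverse hk; simpa using this
  · rintro ⟨k, rfl, hk⟩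
    exact ⟨k, rfl, aux_simonCong_reverse hk⟩

lemma aux_sdelta_comm (u v : List A) : sdelta u v = sdelta v u := by
  unfold sdelta
  congr 1
  ext d
  constructor <;> rintro ⟨k, rfl, hk⟩ <;>
    exact ⟨k, rfl, fun s hs => (hk s hs).symm⟩

lemma aux_rdist_insert (u v : List A) (a b : A) :
    rdist (u ++ [a] ++ v) [b] ≤ 1 + rdist (u ++ v) [b] := by
  unfold rdist sdelta
  apply sSup_le
  rintro d ⟨k, rfl, hk⟩
  cases k with
  | zero => simp
  | succ m =>
    have hm : SimonCong m (u ++ v) ((u ++ v) ++ [b]) := aux_key_lemma u v a b m hk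
    have hle : (m : ℕ∞) ≤
        sSup {d : ℕ∞ | ∃ k : ℕ, d = k ∧ SimonCong k (u ++ v) ((u ++ v) ++ [b])} :=
      le_sSup ⟨m, rfl, hm⟩
    calc ((m + 1 : ℕ) : ℕ∞) = 1 + (m : ℕ∞) := by push_cast; ring
    _ ≤ _ := add_le_add (le_refl 1) hle

lemma aux_ldist_eq (b : A) (w : List A) : ldist [b] w = rdist w.reverse [b] := by
  unfold ldist rdist
  rw [aux_sdelta_comm]
  rw [← aux_sdelta_reverse w ([b] ++ w)]
  congr 1
  simp

end Stmt11Aux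

/-- inserting a letter increases `r` and `ℓ` by at most one. -/
theorem stmt11 {A : Type*} [Fintype A] (u v : List A) (a b : A) :
    rdist (u ++ [a] ++ v) [b] ≤ 1 + rdist (u ++ v) [b] ∧
    ldist [b] (u ++ [a] ++ v) ≤ 1 + ldist [b] (u ++ v) := by
  constructor
  · exact aux_rdist_insert u v a b
  · rw [aux_ldist_eq, aux_ldist_eq]
    have h1 : (u ++ [a] ++ v).reverse = v.reverse ++ [a] ++ u.reverse := by simp
    have h2 : (u ++ v).reverse = v.reverse ++ u.reverse := by simp
    rw [h1, h2]
    exact aux_rdist_insert v.reverse u.reverse a b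
end

section
/- Let A be a finite alphabet. For any word u over A, any letter a ∈ A, and any A-arch s, r(s·u, a) = 1 + r(u, a). -/
variable {A : Type*}

section AuxStmt14

lemma simonCong_anti {u v : List A} {j k : ℕ} (h : j ≤ k) (hc : SimonCong k u v) :
    SimonCong j u v := fun s hsl => hc s (hsl.trans h)

lemma sdelta_eq {u v : List A} {m : ℕ} (h1 : SimonCong m u v)
    (h2 : ¬ SimonCong (m+1) u v) : sdelta u v = m := by
  apply le_antisymm
  · apply sSup_le
    rintro d ⟨k, rfl, hk⟩
    norm_cast
    by_contra hlt
    push_neg at hlt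
    exact h2 (simonCong_anti hlt hk)
  · exact le_sSup ⟨m, rfl, h1⟩

lemma key_iff (s u : List A) (hall : ∀ a : A, a ∈ s) (s' : List A) (b : A)
    (hsplit : s = s' ++ [b]) (hb : b ∉ s') (a : A) (k : ℕ) :
    SimonCong (k+1) (s++u) ((s++u)++[a]) ↔ SimonCong k u (u++[a]) := by
  constructor
  · intro h w hw
    constructor
    · exact fun hw' => hw'.trans (List.sublist_append_left u [a])
    · intro hw'
      have hbw : (b::w).Sublist ((s++u)++[a]) := by
        rw [List.append_assoc]
        show ([b]++w).Sublist (s ++ (u++[a]))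
        exact List.Sublist.append (by rw [hsplit]; simp) hw'
      have hbw2 : (b::w).Sublist (s++u) :=
        (h (b::w) (by simpa using Nat.succ_le_succ hw)).mpr hbw
      obtain ⟨x, y, hxy, hx, hy⟩ := List.sublist_append_iff.mp hbw2
      cases x with
      | nil =>
        simp at hxy
        exact (List.sublist_cons_self b w).trans (hxy ▸ hy)
      | cons c x' =>
        rw [List.cons_append] at hxy
        injection hxy with h1 h2
        subst h1; subst h2
        rw [hsplit] at hx
        obtain ⟨p, q, hpq, hp, hq⟩ := List.sublist_append_iff.mp hx
        cases p with
        | nil =>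
          simp at hpq
          have : x'.length + 1 ≤ 1 := by
            have := (hpq ▸ hq).length_le
            simpa using this
          have hx0 : x' = [] := List.eq_nil_of_length_eq_zero (by omega)
          subst hx0
          simpa using hy
        | cons d p' =>
          rw [List.cons_append] at hpq
          injection hpq with h1 _
          subst h1
          exact absurd (hp.subset List.mem_cons_self) hb
  · intro h w hw
    constructor
    · exact fun hw' => hw'.trans (List.sublist_append_left (s++u) [a])
    · intro hw'
      rw [List.append_assoc] at hw'
      obtain ⟨x, y, hxy, hx, hy⟩ := List.sublist_append_iff.mp hw'
      by_cases hyl : y.length ≤ k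
      · exact hxy ▸ List.Sublist.append hx ((h y hyl).mpr hy)
      · have hxnil : x = [] := by
          have := hw
          rw [hxy, List.length_append] at this
          exact List.eq_nil_of_length_eq_zero (by omega)
        subst hxnil
        simp at hxy
        subst hxy
        cases w with
        | nil => simp
        | cons c w' =>
          have hw'u : w'.Sublist u := by
            refine (h w' ?_).mpr ((List.sublist_cons_self c w').trans hy)
            simpa using hw
          have : (c::w') = [c] ++ w' := rfl
          rw [this]
          exact List.Sublist.append (by simpa using hall c) hw'u

end AuxStmt14

/-- prepending an arch shifts `r` by one. -/
theorem stmt14 {A : Type*} [Fintype A] (u : List A) (a : A) (s : List A)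
    (hs : IsArch A s) :
    rdist (s ++ u) [a] = 1 + rdist u [a] := by
  -- s is nonempty since a : A and every letter occurs in s
  have hsne : s ≠ [] := fun h => by simpa [h] using hs.1 a
  set b := s.getLast hsne with hbdef
  have hsplit : s = s.dropLast ++ [b] := (List.dropLast_append_getLast hsne).symm
  have hb : b ∉ s.dropLast := by
    obtain ⟨c, hc⟩ := hs.2 s.dropLast ⟨[b], hsplit.symm⟩ (by
      intro h
      rw [h] at hsplit
      simpa using congrArg List.length hsplit)
    have hcb : c = b := by
      have := hs.1 c
      rw [hsplit] at this
      rcases List.mem_append.mp this with h' | h'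
      · exact absurd h' hc
      · simpa using h'
    exact hcb ▸ hc
  have hkey := key_iff s u hs.1 s.dropLast b hsplit hb a
  -- the congruence fails for large enough k
  have hfail : ¬ SimonCong (u.length + 1) u (u ++ [a]) := by
    intro h
    have := (h (u ++ [a]) (by simp)).mpr (List.Sublist.refl _)
    have := this.length_le
    simp at this
  have hne : {k : ℕ | ¬ SimonCong k u (u ++ [a])}.Nonempty := ⟨_, hfail⟩
  set n := sInf {k : ℕ | ¬ SimonCong k u (u ++ [a])} with hndef
  have hnmem : ¬ SimonCong n u (u ++ [a]) := Nat.sInf_mem hne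
  have hn0 : n ≠ 0 := by
    intro h
    apply hnmem
    rw [h]
    intro w hw
    rw [List.length_eq_zero_iff.mp (Nat.le_zero.mp hw)]
    simp
  obtain ⟨m, hm⟩ : ∃ m, n = m + 1 := ⟨n - 1, (Nat.succ_pred_eq_of_ne_zero hn0).symm⟩
  rw [hm] at hnmem
  have hPm : SimonCong m u (u ++ [a]) := by
    by_contra h
    have := Nat.sInf_le (show m ∈ {k : ℕ | ¬ SimonCong k u (u ++ [a])} from h)
    rw [← hndef, hm] at this
    omega
  have h1 : sdelta u (u ++ [a]) = m := sdelta_eq hPm hnmem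
  have h2 : sdelta (s ++ u) ((s ++ u) ++ [a]) = (m + 1 : ℕ) :=
    sdelta_eq ((hkey m).mpr hPm) (fun h => hnmem ((hkey (m+1)).mp h))
  rw [rdist, rdist, h1, h2]
  push_cast
  ring
end
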